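/- arXiv:0906.0620 — 9 statements merged into one kernel-verified Lean document; each statement's English description precedes it below -/
import Mathlib

section
/- Let (G,q) be a pre-metric group and let H ⊆ G be an isotropic subgroup. Then H ⊆ H⊥, the restriction of q to H⊥ satisfies q(g+h) = q(g) for all g ∈ H⊥ and h ∈ H, so q induces a quadratic form q̃ on the quotient group H⊥/H, and the Gauss sums satisfy τ⁺(G,q) = τ⁺(H⊥/H, q̃)·|H| and τ⁻(G,q) = τ⁻(H⊥/H, q̃)·|H| (the order |H| regarded as an element of k). -/
/-- The bicharacter associated with a `kˣ`-valued function `q` on `G`: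
`b(g,h) = q(g+h) · q(g)⁻¹ · q(h)⁻¹`. -/
def bchar {k : Type*} [Field k] {G : Type*} [AddCommGroup G] (q : G → kˣ) (g h : G) : kˣ :=
  q (g + h) * (q g)⁻¹ * (q h)⁻¹

/-- `q : G → kˣ` is a quadratic form: `q (-g) = q g` for all `g`, and the associated
function `bchar q` is bimultiplicative. -/
structure IsQuadForm {k : Type*} [Field k] {G : Type*} [AddCommGroup G] (q : G → kˣ) : Prop where
  map_neg : ∀ g : G, q (-g) = q g
  bchar_add_left : ∀ g₁ g₂ h : G, bchar q (g₁ + g₂) h = bchar q g₁ h * bchar q g₂ h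
  bchar_add_right : ∀ g h₁ h₂ : G, bchar q g (h₁ + h₂) = bchar q g h₁ * bchar q g h₂

/-- The Gauss sum `τ⁺(G,q) = ∑_{g ∈ G} q(g)`, as an element of `k`. -/
noncomputable def tauPlus {k : Type*} [Field k] {G : Type*} [AddCommGroup G] (q : G → kˣ) : k :=
  ∑ᶠ g : G, (q g : k)

/-- The Gauss sum `τ⁻(G,q) = ∑_{g ∈ G} q(g)⁻¹`, as an element of `k`. -/
noncomputable def tauMinus {k : Type*} [Field k] {G : Type*} [AddCommGroup G] (q : G → kˣ) : k :=
  ∑ᶠ g : G, (((q g)⁻¹ : kˣ) : k)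

/-- Non-degeneracy of (the bicharacter associated with) `q` : the map
`g ↦ b(g, ·)` from `G` to `Hom(G, kˣ)` is injective. -/
def Nondeg {k : Type*} [Field k] {G : Type*} [AddCommGroup G] (q : G → kˣ) : Prop :=
  Function.Injective fun g : G => fun h : G => bchar q g h

/-- Isomorphism of pre-metric groups: a group isomorphism `φ : G₁ ≃ G₂`
with `q₂ ∘ φ = q₁`. -/
def PMIso {k : Type*} [Field k] {G₁ : Type*} [AddCommGroup G₁] {G₂ : Type*} [AddCommGroup G₂]
    (q₁ : G₁ → kˣ) (q₂ : G₂ → kˣ) : Prop :=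
  ∃ φ : G₁ ≃+ G₂, ∀ g : G₁, q₂ (φ g) = q₁ g

section aux
variable {k : Type*} [Field k] {G : Type*} [AddCommGroup G]

lemma q_add_eq (q : G → kˣ) (g h : G) : q (g + h) = bchar q g h * q g * q h := by
  refine Units.ext ?_
  have h1 : ((q g : k)) ≠ 0 := Units.ne_zero _
  have h2 : ((q h : k)) ≠ 0 := Units.ne_zero _
  simp only [bchar, Units.val_mul, Units.val_inv_eq_inv_val]
  field_simp

lemma bchar_zero_left (q : G → kˣ) (hq : IsQuadForm q) (h : G) : bchar q 0 h = 1 := by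
  have h1 := hq.bchar_add_left 0 0 h
  rw [add_zero] at h1
  have h2 : bchar q 0 h * 1 = bchar q 0 h * bchar q 0 h := by rw [mul_one]; exact h1
  exact (mul_left_cancel h2).symm

lemma bchar_neg_left (q : G → kˣ) (hq : IsQuadForm q) (g h : G) :
    bchar q (-g) h = (bchar q g h)⁻¹ := by
  have h1 := hq.bchar_add_left g (-g) h
  rw [add_neg_cancel, bchar_zero_left q hq] at h1
  exact (eq_inv_of_mul_eq_one_right h1.symm)

lemma bchar_inv_form (q : G → kˣ) (g h : G) :
    bchar (fun x => (q x)⁻¹) g h = (bchar q g h)⁻¹ := by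
  simp only [bchar, mul_inv, inv_inv]

lemma isQuadForm_inv (q : G → kˣ) (hq : IsQuadForm q) :
    IsQuadForm (fun x => (q x)⁻¹) := by
  refine ⟨fun g => by simp [hq.map_neg g], fun g₁ g₂ h => ?_, fun g h₁ h₂ => ?_⟩
  · rw [bchar_inv_form, bchar_inv_form, bchar_inv_form, hq.bchar_add_left, mul_inv]
  · rw [bchar_inv_form, bchar_inv_form, bchar_inv_form, hq.bchar_add_right, mul_inv]

lemma char_sum_zero {H : Type*} [AddCommGroup H] [Fintype H] (χ : H → kˣ)
    (hχ : ∀ a b : H, χ (a + b) = χ a * χ b) (hne : ∃ a, χ a ≠ 1) :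
    ∑ a : H, (χ a : k) = 0 := by
  obtain ⟨a, ha⟩ := hne
  have key : (χ a : k) * ∑ b : H, (χ b : k) = ∑ b : H, (χ b : k) := by
    rw [Finset.mul_sum]
    refine Fintype.sum_equiv (Equiv.addLeft a) _ _ fun b => ?_
    rw [← Units.val_mul, ← hχ]; rfl
  have h2 : ((χ a : k) - 1) * ∑ b : H, (χ b : k) = 0 := by linear_combination key
  rcases mul_eq_zero.mp h2 with h | h
  · have : (χ a : k) = ((1:kˣ) : k) := by rw [Units.val_one]; exact sub_eq_zero.mp h
    exact absurd (Units.ext this) ha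
  · exact h

noncomputable def fiberEquiv {P : Type*} [AddCommGroup P] (N : AddSubgroup P) (j : P ⧸ N) :
    {x : P // (QuotientAddGroup.mk x : P ⧸ N) = j} ≃ N where
  toFun x := ⟨-j.out + x.1, by
    have h : (QuotientAddGroup.mk j.out : P ⧸ N) = QuotientAddGroup.mk x.1 :=
      (Quotient.out_eq j).trans x.2.symm
    exact (QuotientAddGroup.eq).mp h⟩
  invFun n := ⟨j.out + n.1, by
    have h1 : (QuotientAddGroup.mk j.out : P ⧸ N) = QuotientAddGroup.mk (j.out + n.1) :=
      (QuotientAddGroup.eq).mpr (by simp)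
    exact h1.symm.trans (Quotient.out_eq j)⟩
  left_inv x := by ext; simp
  right_inv n := by ext; simp

lemma sum_quotient {P : Type*} [AddCommGroup P] [Fintype P]
    (N : AddSubgroup P) [Fintype (P ⧸ N)] (f : (P ⧸ N) → k) :
    ∑ x : P, f (QuotientAddGroup.mk x) = (Nat.card N : k) * ∑ c : P ⧸ N, f c := by
  classical
  rw [← Fintype.sum_fiberwise (fun x : P => (QuotientAddGroup.mk x : P ⧸ N))
    (fun x => f (QuotientAddGroup.mk x))]
  rw [Finset.mul_sum]
  refine Finset.sum_congr rfl fun j _ => ?_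
  have hconst : ∀ i : {i : P // (QuotientAddGroup.mk i : P ⧸ N) = j},
      f (QuotientAddGroup.mk i.1) = f j := fun i => by rw [i.2]
  rw [Finset.sum_congr rfl (fun i _ => hconst i), Finset.sum_const, Finset.card_univ,
    Fintype.card_congr (fiberEquiv N j), nsmul_eq_mul]
  congr 1
  rw [Nat.card_eq_fintype_card]

/-- Main computation: `τ⁺(G,q) = τ⁺(P/H, qbar) · |H|`. -/
lemma key_tau {k : Type*} [Field k] [CharZero k]
    {G : Type*} [AddCommGroup G] [Finite G]
    (q : G → kˣ) (hq : IsQuadForm q)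
    (H : AddSubgroup G) (hiso : ∀ h ∈ H, q h = 1)
    (P : AddSubgroup G) (hP : ∀ g : G, g ∈ P ↔ ∀ h ∈ H, bchar q g h = 1)
    (qbar : (↥P ⧸ H.addSubgroupOf P) → kˣ)
    (hqbar : ∀ x : ↥P, qbar (QuotientAddGroup.mk x) = q (x : G)) :
    tauPlus q = tauPlus qbar * (Nat.card H : k) := by
  classical
  haveI : Fintype G := Fintype.ofFinite G
  haveI : Fintype ↥H := Fintype.ofFinite _
  haveI : Fintype ↥P := Fintype.ofFinite _
  haveI : Fintype (↥P ⧸ H.addSubgroupOf P) := Fintype.ofFinite _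
  -- cardinality facts
  have hcard : (Nat.card H : k) ≠ 0 := Nat.cast_ne_zero.mpr (Nat.card_pos).ne'
  -- double sum
  have hdouble : ∑ h : ↥H, ∑ g : G, (q (g + h) : k) = (Nat.card H : k) * ∑ g : G, (q g : k) := by
    have : ∀ h : ↥H, ∑ g : G, (q (g + (h : G)) : k) = ∑ g : G, (q g : k) := fun h =>
      Fintype.sum_equiv (Equiv.addRight (h : G)) _ _ fun g => rfl
    rw [Finset.sum_congr rfl fun h _ => this h, Finset.sum_const, Finset.card_univ,
      nsmul_eq_mul, Nat.card_eq_fintype_card]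
  have hswap : ∑ h : ↥H, ∑ g : G, (q (g + h) : k)
      = ∑ g : G, ∑ h : ↥H, (q (g + h) : k) := Finset.sum_comm
  have hinner : ∀ g : G, ∑ h : ↥H, (q (g + (h:G)) : k)
      = (q g : k) * ∑ h : ↥H, (bchar q g h : k) := by
    intro g
    rw [Finset.mul_sum]
    refine Finset.sum_congr rfl fun h _ => ?_
    rw [q_add_eq q g h, hiso _ h.2]
    push_cast
    ring
  have hchar : ∀ g : G, ∑ h : ↥H, (bchar q g (h:G) : k)
      = if g ∈ P then (Nat.card H : k) else 0 := by
    intro g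
    by_cases hg : g ∈ P
    · rw [if_pos hg]
      have : ∀ h : ↥H, (bchar q g (h:G) : k) = 1 := fun h => by
        rw [(hP g).mp hg h h.2, Units.val_one]
      rw [Finset.sum_congr rfl fun h _ => this h, Finset.sum_const, Finset.card_univ,
        nsmul_eq_mul, mul_one, Nat.card_eq_fintype_card]
    · rw [if_neg hg]
      refine char_sum_zero (fun h : ↥H => bchar q g (h:G)) (fun a b => ?_) ?_
      · exact hq.bchar_add_right g a b
      · by_contra hcon
        push_neg at hcon
        exact hg ((hP g).mpr fun h hh => hcon ⟨h, hh⟩)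
  -- conclude: sum over G equals sum over P
  have hGP : ∑ g : G, (q g : k) = ∑ x : ↥P, (q (x : G) : k) := by
    have e1 : (Nat.card H : k) * ∑ g : G, (q g : k)
        = ∑ g : G, (q g : k) * (if g ∈ P then (Nat.card H : k) else 0) := by
      rw [← hdouble, hswap]
      exact Finset.sum_congr rfl fun g _ => by rw [hinner g, hchar g]
    have e2 : ∑ g : G, (q g : k) * (if g ∈ P then (Nat.card H : k) else 0)
        = (Nat.card H : k) * ∑ x : ↥P, (q (x : G) : k) := by
      rw [Finset.mul_sum]
      rw [← Finset.sum_subtype (Finset.univ.filter (· ∈ P)) (fun x => by simp)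
        (fun g => (Nat.card H : k) * (q g : k))]
      rw [Finset.sum_filter]
      refine Finset.sum_congr rfl fun g _ => ?_
      by_cases hg : g ∈ P <;> simp [hg, mul_comm]
    exact mul_left_cancel₀ hcard (e1.trans e2)
  -- sum over P via the quotient
  have hPQ : ∑ x : ↥P, (q (x : G) : k)
      = (Nat.card H : k) * ∑ c : ↥P ⧸ H.addSubgroupOf P, (qbar c : k) := by
    have := sum_quotient (k := k) (H.addSubgroupOf P) (fun c => (qbar c : k))
    have hc : Nat.card (H.addSubgroupOf P) = Nat.card H :=
      Nat.card_congr (AddSubgroup.addSubgroupOfEquivOfLe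
        (fun h hh => (hP h).mpr fun h' hh' => by
          rw [bchar, hiso _ (add_mem hh hh'), hiso _ hh, hiso _ hh']; simp)).toEquiv
    rw [← hc, ← this]
    exact Finset.sum_congr rfl fun x _ => by rw [hqbar x]
  rw [tauPlus, tauPlus, finsum_eq_sum_of_fintype, finsum_eq_sum_of_fintype, hGP, hPQ]
  ring
end aux

/-- For a pre-metric group `(G,q)` and an isotropic subgroup `H ⊆ G`:
`H ⊆ H⊥`; `q(g+h) = q(g)` for `g ∈ H⊥`, `h ∈ H`; `q` induces a quadratic form `q̃` on
`H⊥/H`, and `τ±(G,q) = τ±(H⊥/H, q̃) · |H|`. -/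
theorem gauss_sum_isotropic_subquotient
    {k : Type*} [Field k] [IsAlgClosed k] [CharZero k]
    {G : Type*} [AddCommGroup G] [Finite G]
    (q : G → kˣ) (hq : IsQuadForm q)
    (H : AddSubgroup G) (hiso : ∀ h ∈ H, q h = 1) :
    (∀ h ∈ H, ∀ h' ∈ H, bchar q h h' = 1) ∧
    (∀ g : G, (∀ h ∈ H, bchar q g h = 1) → ∀ h ∈ H, q (g + h) = q g) ∧
    ∃ P : AddSubgroup G,
      (∀ g : G, g ∈ P ↔ ∀ h ∈ H, bchar q g h = 1) ∧
      ∃ qbar : (↥P ⧸ H.addSubgroupOf P) → kˣ,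
        IsQuadForm qbar ∧
        (∀ x : ↥P, qbar (QuotientAddGroup.mk x) = q (x : G)) ∧
        tauPlus q = tauPlus qbar * (Nat.card H : k) ∧
        tauMinus q = tauMinus qbar * (Nat.card H : k) := by
  classical
  have hHH : ∀ h ∈ H, ∀ h' ∈ H, bchar q h h' = 1 := fun h hh h' hh' => by
    rw [bchar, hiso _ (add_mem hh hh'), hiso _ hh, hiso _ hh']; simp
  have htrans : ∀ g : G, (∀ h ∈ H, bchar q g h = 1) → ∀ h ∈ H, q (g + h) = q g := by
    intro g hg h hh
    rw [q_add_eq q g h, hg h hh, hiso h hh, one_mul, mul_one]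
  refine ⟨hHH, htrans, ?_⟩
  -- the subgroup P = H^⊥
  set P : AddSubgroup G :=
    { carrier := {g : G | ∀ h ∈ H, bchar q g h = 1}
      zero_mem' := fun h _ => bchar_zero_left q hq h
      add_mem' := fun {a b} ha hb h hh => by
        rw [hq.bchar_add_left a b h, ha h hh, hb h hh, mul_one]
      neg_mem' := fun {a} ha h hh => by
        rw [bchar_neg_left q hq a h, ha h hh, inv_one] } with hPdef
  have hP : ∀ g : G, g ∈ P ↔ ∀ h ∈ H, bchar q g h = 1 := fun g => Iff.rfl
  refine ⟨P, hP, ?_⟩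
  set N := H.addSubgroupOf P with hN
  -- define qbar via representatives
  set qbar : (↥P ⧸ N) → kˣ := fun c => q ((c.out : ↥P) : G) with hqbardef
  have hqbar : ∀ x : ↥P, qbar (QuotientAddGroup.mk x) = q (x : G) := by
    intro x
    set c : ↥P ⧸ N := QuotientAddGroup.mk x with hc
    have h1 : (QuotientAddGroup.mk c.out : ↥P ⧸ N) = QuotientAddGroup.mk x :=
      Quotient.out_eq c
    have h2 : -c.out + x ∈ N := (QuotientAddGroup.eq).mp h1
    have h3 : ((-c.out + x : ↥P) : G) ∈ H := h2
    have h4 : (x : G) = ((c.out : ↥P) : G) + ((-c.out + x : ↥P) : G) := by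
      push_cast
      abel
    rw [hqbardef]
    show q ((c.out : ↥P) : G) = q (x : G)
    rw [h4, htrans _ (c.out).2 _ h3]
  have hbbar : ∀ x y : ↥P, bchar qbar (QuotientAddGroup.mk x) (QuotientAddGroup.mk y)
      = bchar q (x : G) (y : G) := by
    intro x y
    rw [bchar, bchar, ← QuotientAddGroup.mk_add, hqbar, hqbar, hqbar]
    push_cast
    rfl
  have hqfbar : IsQuadForm qbar := by
    constructor
    · intro c
      induction c using QuotientAddGroup.induction_on with
      | H x =>
        rw [← QuotientAddGroup.mk_neg, hqbar, hqbar]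
        push_cast
        exact hq.map_neg _
    · intro c₁ c₂ c₃
      induction c₁ using QuotientAddGroup.induction_on with
      | H x =>
      induction c₂ using QuotientAddGroup.induction_on with
      | H y =>
      induction c₃ using QuotientAddGroup.induction_on with
      | H z =>
        rw [← QuotientAddGroup.mk_add, hbbar, hbbar, hbbar]
        push_cast
        exact hq.bchar_add_left _ _ _
    · intro c₁ c₂ c₃
      induction c₁ using QuotientAddGroup.induction_on with
      | H x =>
      induction c₂ using QuotientAddGroup.induction_on with
      | H y =>
      induction c₃ using QuotientAddGroup.induction_on with
      | H z =>
        rw [← QuotientAddGroup.mk_add, hbbar, hbbar, hbbar]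
        push_cast
        exact hq.bchar_add_right _ _ _
  refine ⟨qbar, hqfbar, hqbar, ?_, ?_⟩
  · exact key_tau q hq H hiso P hP qbar hqbar
  · have h1 := key_tau (fun g => (q g)⁻¹) (isQuadForm_inv q hq) H
      (fun h hh => by simp [hiso h hh]) P
      (fun g => by
        rw [hP g]
        constructor
        · intro hg h hh; rw [bchar_inv_form, hg h hh, inv_one]
        · intro hg h hh
          have := hg h hh
          rw [bchar_inv_form] at this
          exact inv_injective (by rw [this, inv_one]))
      (fun c => (qbar c)⁻¹)
      (fun x => by show (qbar _)⁻¹ = (q _)⁻¹; rw [hqbar x])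
    calc tauMinus q = tauPlus (fun g => (q g)⁻¹) := rfl
      _ = tauPlus (fun c => (qbar c)⁻¹) * (Nat.card H : k) := h1
      _ = tauMinus qbar * (Nat.card H : k) := rfl
end

section
/- Let (G,q) be a pre-metric group and let H ⊆ G be a Lagrangian subgroup. Then τ⁺(G,q) = |H| and τ⁻(G,q) = |H| (the order |H| regarded as an element of k). -/
theorem tauPlus_aux
    {k : Type*} [Field k] [CharZero k]
    {G : Type*} [AddCommGroup G] [Finite G]
    (q : G → kˣ) (hq : IsQuadForm q)
    (H : AddSubgroup G)
    (hiso : ∀ h ∈ H, q h = 1)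
    (hlag : ∀ g : G, g ∈ H ↔ ∀ h ∈ H, bchar q g h = 1) :
    tauPlus q = (Nat.card H : k) := by
  classical
  have : Fintype G := Fintype.ofFinite G
  have : Fintype H := Fintype.ofFinite H
  set S : k := ∑ g : G, (q g : k) with hSdef
  have hS : tauPlus q = S := by
    rw [tauPlus, finsum_eq_sum_of_fintype]
  -- inner character sums
  have key0 : ∀ g ∈ H, ∑ h : H, (bchar q g (h : G) : k) = (Nat.card H : k) := by
    intro g hg
    have h1 : ∀ h : H, (bchar q g (h : G) : k) = 1 := by
      intro h
      rw [(hlag g).mp hg h h.2]; simp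
    simp only [h1, Finset.sum_const, Finset.card_univ, nsmul_eq_mul, mul_one]
    rw [Nat.card_eq_fintype_card]
  have key1 : ∀ g : G, g ∉ H → ∑ h : H, (bchar q g (h : G) : k) = 0 := by
    intro g hg
    obtain ⟨h₀, hh₀, hne⟩ : ∃ h₀ ∈ H, bchar q g h₀ ≠ 1 := by
      by_contra hc
      push_neg at hc
      exact hg ((hlag g).mpr hc)
    set c : kˣ := bchar q g h₀ with hc
    have hshift : (c : k) * ∑ h : H, (bchar q g (h : G) : k)
        = ∑ h : H, (bchar q g (h : G) : k) := by
      rw [Finset.mul_sum]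
      have e1 : ∀ h : H, (c : k) * (bchar q g (h : G) : k)
          = (bchar q g (((⟨h₀, hh₀⟩ : H) + h : H) : G) : k) := by
        intro h
        have := hq.bchar_add_right g h₀ (h : G)
        push_cast [this]
        ring
      simp only [e1]
      exact Fintype.sum_equiv (Equiv.addLeft (⟨h₀, hh₀⟩ : H)) _ _ (fun h => rfl)
    have hcne : (c : k) ≠ 1 := fun h => hne (Units.ext h)
    have h2 : ((c : k) - 1) * ∑ h : H, (bchar q g (h : G) : k) = 0 := by
      have := sub_eq_zero.mpr hshift
      linear_combination this
    exact (mul_eq_zero.mp h2).resolve_left (sub_ne_zero.mpr hcne)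
  -- expansion of q (g + h)
  have expand : ∀ g : G, ∑ h : H, (q (g + (h : G)) : k)
      = (q g : k) * ∑ h : H, (bchar q g (h : G) : k) := by
    intro g
    rw [Finset.mul_sum]
    refine Finset.sum_congr rfl fun h _ => ?_
    have hqh : (q (h : G) : k) = 1 := by rw [hiso h h.2]; simp
    rw [bchar]
    push_cast [hqh]
    field_simp
  -- double counting
  have swap : ∑ g : G, ∑ h : H, (q (g + (h : G)) : k) = (Nat.card H : k) * S := by
    rw [Finset.sum_comm]
    have e2 : ∀ h : H, ∑ g : G, (q (g + (h : G)) : k) = S := by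
      intro h
      exact Fintype.sum_equiv (Equiv.addRight (h : G)) _ _ (fun g => rfl)
    simp only [e2, Finset.sum_const, Finset.card_univ, nsmul_eq_mul]
    rw [Nat.card_eq_fintype_card]
  have count : ∑ g : G, ∑ h : H, (q (g + (h : G)) : k)
      = (Nat.card H : k) * (Nat.card H : k) := by
    have e3 : ∀ g : G, ∑ h : H, (q (g + (h : G)) : k)
        = if g ∈ H then (Nat.card H : k) else 0 := by
      intro g
      by_cases hg : g ∈ H
      · rw [expand, key0 g hg, hiso g hg, if_pos hg]; simp
      · rw [expand, key1 g hg, if_neg hg, mul_zero]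
    simp only [e3]
    rw [Finset.sum_ite, Finset.sum_const, Finset.sum_const_zero, add_zero, nsmul_eq_mul]
    congr 1
    norm_cast
    rw [Nat.card_eq_fintype_card (α := H)]
    refine (Fintype.card_subtype (fun x => x ∈ H)).symm.trans ?_
    congr 1
  have hcard : (Nat.card H : k) ≠ 0 := Nat.cast_ne_zero.mpr Nat.card_pos.ne'
  rw [hS]
  exact mul_left_cancel₀ hcard (swap.symm.trans count)


/-- If `H` is a Lagrangian subgroup of a pre-metric group `(G,q)`,
then `τ⁺(G,q) = |H|` and `τ⁻(G,q) = |H|` in `k`. -/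
theorem gauss_sum_of_lagrangian
    {k : Type*} [Field k] [IsAlgClosed k] [CharZero k]
    {G : Type*} [AddCommGroup G] [Finite G]
    (q : G → kˣ) (hq : IsQuadForm q)
    (H : AddSubgroup G)
    (hiso : ∀ h ∈ H, q h = 1)
    (hlag : ∀ g : G, g ∈ H ↔ ∀ h ∈ H, bchar q g h = 1) :
    tauPlus q = (Nat.card H : k) ∧ tauMinus q = (Nat.card H : k) := by
  have binv : ∀ g h : G, bchar (fun x => (q x)⁻¹) g h = (bchar q g h)⁻¹ := by
    intro g h
    simp only [bchar, mul_inv, inv_inv]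
  have hq' : IsQuadForm (fun x : G => (q x)⁻¹) := by
    refine ⟨fun g => by simp [hq.map_neg], fun g₁ g₂ h => ?_, fun g h₁ h₂ => ?_⟩
    · rw [binv, binv, binv, hq.bchar_add_left, mul_inv]
    · rw [binv, binv, binv, hq.bchar_add_right, mul_inv]
  have hiso' : ∀ h ∈ H, (q h)⁻¹ = 1 := fun h hh => by rw [hiso h hh]; simp
  have hlag' : ∀ g : G, g ∈ H ↔ ∀ h ∈ H, bchar (fun x => (q x)⁻¹) g h = 1 := by
    intro g
    rw [hlag g]
    constructor
    · intro hg h hh; rw [binv, hg h hh]; simp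
    · intro hg h hh
      have := hg h hh
      rw [binv] at this
      exact inv_injective (by simpa using this)
  exact ⟨tauPlus_aux q hq H hiso hlag, tauPlus_aux (fun x => (q x)⁻¹) hq' H hiso' hlag'⟩
end

section
/- Let (G,q) be a metric group. Then τ⁺(G,q)·τ⁻(G,q) = |G| (the order |G| regarded as an element of k). -/
/-- For a metric group `(G,q)` one has `τ⁺(G,q)·τ⁻(G,q) = |G|` in `k`. -/
theorem gauss_sum_mul_gauss_sum_inv
    {k : Type*} [Field k] [IsAlgClosed k] [CharZero k]
    {G : Type*} [AddCommGroup G] [Finite G]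
    (q : G → kˣ) (hq : IsQuadForm q) (hnd : Nondeg q) :
    tauPlus q * tauMinus q = (Nat.card G : k) := by
  classical
  have _inst := Fintype.ofFinite G
  have hsymm : ∀ g h : G, bchar q g h = bchar q h g := by
    intro g h
    rw [bchar, bchar, add_comm h g, mul_right_comm]
  have hb0 : ∀ h : G, bchar q 0 h = 1 := by
    intro h
    have h1 := hq.bchar_add_left 0 0 h
    rw [add_zero] at h1
    exact (mul_eq_left.mp h1.symm)
  have hq0 : q 0 = 1 := by
    have h1 := hb0 0
    rw [bchar, add_zero] at h1
    have h2 : (q 0)⁻¹ = 1 := by simpa using h1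
    simpa [inv_eq_one] using h2
  -- character sum
  have hsum : ∀ x : G, x ≠ 0 → ∑ h : G, ((bchar q h x : kˣ) : k) = 0 := by
    intro x hx
    obtain ⟨h₀, hh₀⟩ : ∃ h₀ : G, bchar q x h₀ ≠ 1 := by
      by_contra hc
      push_neg at hc
      exact hx (hnd (funext fun h => by simpa using (hc h).trans (hb0 h).symm))
    set S := ∑ h : G, ((bchar q h x : kˣ) : k) with hS
    have key : ((bchar q h₀ x : kˣ) : k) * S = S := by
      rw [hS, Finset.mul_sum]
      calc ∑ h : G, ((bchar q h₀ x : kˣ) : k) * ((bchar q h x : kˣ) : k)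
          = ∑ h : G, ((bchar q (h₀ + h) x : kˣ) : k) := by
            refine Finset.sum_congr rfl fun h _ => ?_
            rw [hq.bchar_add_left h₀ h x]
            push_cast
            ring
        _ = S := Fintype.sum_equiv (Equiv.addLeft h₀) _ _ (fun h => rfl)
    have hb1 : ((bchar q h₀ x : kˣ) : k) ≠ 1 := by
      rw [hsymm] at hh₀
      exact fun he => hh₀ (Units.ext (by rw [he, Units.val_one]))
    have h0 : (((bchar q h₀ x : kˣ) : k) - 1) * S = 0 := by
      rw [sub_mul, one_mul, key, sub_self]
    exact (mul_eq_zero.mp h0).resolve_left (sub_ne_zero.mpr hb1)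
  rw [tauPlus, tauMinus, finsum_eq_sum_of_fintype, finsum_eq_sum_of_fintype,
    Finset.sum_mul_sum]
  calc ∑ g : G, ∑ h : G, (q g : k) * (((q h)⁻¹ : kˣ) : k)
      = ∑ h : G, ∑ g : G, (q g : k) * (((q h)⁻¹ : kˣ) : k) := Finset.sum_comm
    _ = ∑ h : G, ∑ x : G, (q (h + x) : k) * (((q h)⁻¹ : kˣ) : k) := by
        refine Finset.sum_congr rfl fun h _ => ?_
        exact (Fintype.sum_equiv (Equiv.addLeft h) _ _ (fun x => rfl)).symm
    _ = ∑ h : G, ∑ x : G, ((bchar q h x : kˣ) : k) * (q x : k) := by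
        refine Finset.sum_congr rfl fun h _ => Finset.sum_congr rfl fun x _ => ?_
        rw [bchar]
        push_cast
        field_simp
    _ = ∑ x : G, (q x : k) * ∑ h : G, ((bchar q h x : kˣ) : k) := by
        rw [Finset.sum_comm]
        refine Finset.sum_congr rfl fun x _ => ?_
        rw [Finset.mul_sum]
        exact Finset.sum_congr rfl fun h _ => mul_comm _ _
    _ = (Nat.card G : k) := by
        rw [Finset.sum_eq_single 0]
        · have : ∀ h : G, ((bchar q h 0 : kˣ) : k) = 1 := fun h => by
            rw [hsymm, hb0]; simp
          simp only [this, Finset.sum_const, Finset.card_univ, nsmul_eq_mul, mul_one, hq0]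
          rw [Nat.card_eq_fintype_card]
          simp
        · intro x _ hx
          rw [hsum x hx, mul_zero]
        · intro h
          exact absurd (Finset.mem_univ 0) h
end

section
/- Let G be a finite abelian group whose order is a power of 2, and suppose there exists a symmetric bicharacter b : G × G → kˣ (i.e. b is bimultiplicative and b(x,y) = b(y,x)) such that b(x,x) ≠ 1 for every x ∈ G with x ≠ 0. Then |G| ≤ 2. -/
/-- If a finite abelian `2`-group `G` carries a symmetric bicharacter
`b` with `b(x,x) ≠ 1` for all `x ≠ 0`, then `|G| ≤ 2`. -/
theorem card_le_two_of_anisotropic_symmetric_bicharacter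
    {k : Type*} [Field k] [IsAlgClosed k] [CharZero k]
    {G : Type*} [AddCommGroup G] [Finite G]
    (h2 : ∃ m : ℕ, Nat.card G = 2 ^ m)
    (b : G → G → kˣ)
    (hb_left : ∀ x y z : G, b (x + y) z = b x z * b y z)
    (hb_right : ∀ x y z : G, b x (y + z) = b x y * b x z)
    (hb_symm : ∀ x y : G, b x y = b y x)
    (hanis : ∀ x : G, x ≠ 0 → b x x ≠ 1) :
    Nat.card G ≤ 2 := by
  by_contra hcard
  push_neg at hcard
  -- basic facts
  have hb0 : ∀ x : G, b x (0 : G) = 1 := by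
    intro x
    have := hb_right x 0 0
    rw [add_zero] at this
    exact (left_eq_mul.mp this)
  -- Case A: some element has x + x ≠ 0
  by_cases hexp : ∃ x : G, x + x ≠ 0
  · obtain ⟨x, hx⟩ := hexp
    -- find z with 2z ≠ 0 and 4z = 0
    have key : ∀ n : ℕ, ∀ x : G, 2 ^ n • x = 0 → x + x ≠ 0 →
        ∃ z : G, z + z ≠ 0 ∧ (z + z) + (z + z) = 0 := by
      intro n
      induction n with
      | zero =>
        intro x hx0 hxx
        simp only [pow_zero, one_smul] at hx0
        exact absurd (by rw [hx0, add_zero]) hxx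
      | succ n ih =>
        intro x hx0 hxx
        by_cases h4 : (x + x) + (x + x) = 0
        · exact ⟨x, hxx, h4⟩
        · refine ih (x + x) ?_ h4
          rw [← two_nsmul, smul_smul, ← pow_succ]
          exact hx0
    obtain ⟨m, hm⟩ := h2
    have hx0 : 2 ^ m • x = 0 := by
      rw [← hm]; exact card_nsmul_eq_zero'
    obtain ⟨z, hz2, hz4⟩ := key m x hx0 hx
    -- b (2z) (2z) = (b z z)^4 = b z (4z) = 1
    have e1 : b (z + z) (z + z) = (b z z) ^ 4 := by
      rw [hb_left, hb_right, pow_succ, pow_succ, pow_succ, pow_one]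
      simp [mul_assoc]
    have e2 : (b z z) ^ 4 = 1 := by
      have := hb_right z (z + z) (z + z)
      rw [hz4, hb0, hb_right] at this
      rw [pow_succ, pow_succ, pow_succ, pow_one]
      rw [this]
      simp [mul_assoc]
    exact hanis (z + z) hz2 (by rw [e1, e2])
  · -- Case B: every element has order ≤ 2
    push_neg at hexp
    -- find two distinct nonzero elements
    haveI := Fintype.ofFinite G
    haveI : DecidableEq G := Classical.decEq G
    have hcard' : 2 < Fintype.card G := by rwa [← Nat.card_eq_fintype_card]
    have hs : 1 < (Finset.univ.erase (0 : G)).card := by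
      rw [Finset.card_erase_of_mem (Finset.mem_univ _), Finset.card_univ]
      omega
    obtain ⟨x, hxmem, y, hymem, hxy⟩ := Finset.one_lt_card.mp hs
    have hx0 : x ≠ 0 := Finset.ne_of_mem_erase hxmem
    have hy0 : y ≠ 0 := Finset.ne_of_mem_erase hymem
    -- squares of diagonal values are 1
    have sq_one : ∀ a c : G, (b a c) * (b a c) = 1 := by
      intro a c
      have := hb_right a c c
      rw [hexp c, hb0] at this
      exact this.symm
    have hxx : b x x = -1 := by
      have h1 : ((b x x : k)) * (b x x : k) = 1 := by
        have := congrArg Units.val (sq_one x x); push_cast at this; exact this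
      rcases mul_self_eq_one_iff.mp h1 with h | h
      · exact absurd (Units.ext (by simpa using h)) (hanis x hx0)
      · exact Units.ext (by simpa using h)
    have hyy : b y y = -1 := by
      have h1 : ((b y y : k)) * (b y y : k) = 1 := by
        have := congrArg Units.val (sq_one y y); push_cast at this; exact this
      rcases mul_self_eq_one_iff.mp h1 with h | h
      · exact absurd (Units.ext (by simpa using h)) (hanis y hy0)
      · exact Units.ext (by simpa using h)
    have hxyne : x + y ≠ 0 := by
      intro h
      apply hxy
      have := hexp y
      have hxy' : x = -y := eq_neg_of_add_eq_zero_left h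
      have : y = -y := (neg_eq_of_add_eq_zero_left this).symm
      rw [hxy', ← this]
    have : b (x + y) (x + y) = 1 := by
      rw [hb_left, hb_right, hb_right, hxx, hyy, hb_symm y x]
      have := sq_one x y
      rw [neg_one_mul, mul_neg_one, neg_mul_neg]
      exact sq_one x y
    exact hanis (x + y) hxyne this
end

section
/- Let G be a finite abelian group whose order is a power of 2 and let b : G × G → kˣ be a symmetric bicharacter. Then there exists a subgroup L ⊆ G with L ⊆ L⊥ and [L⊥ : L] ≤ 2, where L⊥ := {g ∈ G : b(g,h) = 1 for all h ∈ L}. -/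
/-- Auxiliary: `b 0 z = 1` for a left-additive map into `kˣ`. -/
theorem bZeroLeft {k : Type*} [Field k] {G : Type*} [AddCommGroup G] (b : G → G → kˣ)
    (hb_left : ∀ x y z : G, b (x + y) z = b x z * b y z) (z : G) : b 0 z = 1 := by
  have h := hb_left 0 0 z
  rw [add_zero] at h
  have h2 : b 0 z * 1 = b 0 z * b 0 z := by rw [mul_one]; exact h
  exact (mul_left_cancel h2).symm

/-- The orthogonal complement of `L` w.r.t. the bicharacter `b`, as a subgroup. -/
def perpSub {k : Type*} [Field k] {G : Type*} [AddCommGroup G] (b : G → G → kˣ)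
    (hb_left : ∀ x y z : G, b (x + y) z = b x z * b y z) (L : AddSubgroup G) :
    AddSubgroup G where
  carrier := {g : G | ∀ h ∈ L, b g h = 1}
  zero_mem' := fun h _ => bZeroLeft b hb_left h
  add_mem' := by
    intro a c ha hc h hh
    rw [hb_left, ha h hh, hc h hh, mul_one]
  neg_mem' := by
    intro a ha h hh
    have h1 := hb_left a (-a) h
    rw [add_neg_cancel, bZeroLeft b hb_left, ha h hh, one_mul] at h1
    exact h1.symm

/-- If `b` is a symmetric bicharacter on a finite abelian `2`-group `G`,
then there is a subgroup `L ⊆ G` with `L ⊆ L⊥` and `[L⊥ : L] ≤ 2`. -/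
theorem exists_almost_lagrangian_subgroup
    {k : Type*} [Field k] [IsAlgClosed k] [CharZero k]
    {G : Type*} [AddCommGroup G] [Finite G]
    (h2 : ∃ m : ℕ, Nat.card G = 2 ^ m)
    (b : G → G → kˣ)
    (hb_left : ∀ x y z : G, b (x + y) z = b x z * b y z)
    (hb_right : ∀ x y z : G, b x (y + z) = b x y * b x z)
    (hb_symm : ∀ x y : G, b x y = b y x) :
    ∃ L : AddSubgroup G,
      ((L : Set G) ⊆ {g : G | ∀ h ∈ L, b g h = 1}) ∧
      Nat.card {g : G // ∀ h ∈ L, b g h = 1} ≤ 2 * Nat.card L := by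
  classical
  obtain ⟨m, hm⟩ := h2
  have hb0l : ∀ z : G, b 0 z = 1 := bZeroLeft b hb_left
  have hnegl : ∀ x z : G, b (-x) z = (b x z)⁻¹ := by
    intro x z
    have h1 := hb_left x (-x) z
    rw [add_neg_cancel, hb0l] at h1
    exact eq_inv_of_mul_eq_one_right h1.symm
  have hnegr : ∀ x z : G, b x (-z) = (b x z)⁻¹ := by
    intro x z; rw [hb_symm, hnegl, hb_symm]
  have hnatl : ∀ (n : ℕ) (x z : G), b (n • x) z = b x z ^ n := by
    intro n
    induction n with
    | zero => intro x z; simpa using hb0l z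
    | succ n ih => intro x z; rw [succ_nsmul, hb_left, ih, pow_succ]
  have hnatr : ∀ (n : ℕ) (x z : G), b x (n • z) = b x z ^ n := by
    intro n x z; rw [hb_symm, hnatl, hb_symm]
  have hintl : ∀ (n : ℤ) (x z : G), b (n • x) z = b x z ^ n := by
    intro n x z
    induction n using Int.induction_on with
    | zero => simpa using hb0l z
    | succ i ih => rw [add_smul, one_smul, hb_left, ih, zpow_add, zpow_one]
    | pred i ih =>
        rw [sub_smul, one_smul, sub_eq_add_neg, hb_left, ih, hnegl, zpow_sub, zpow_one]
  have hintr : ∀ (n : ℤ) (x z : G), b x (n • z) = b x z ^ n := by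
    intro n x z; rw [hb_symm, hintl, hb_symm]
  -- isotropic subgroups
  have hfin : Finite (AddSubgroup G) :=
    Finite.of_injective (fun L : AddSubgroup G => (L : Set G)) SetLike.coe_injective
  have hne : Nonempty {L : AddSubgroup G // ∀ x ∈ L, ∀ y ∈ L, b x y = 1} := by
    refine ⟨⟨⊥, ?_⟩⟩
    intro x hx y hy
    rw [AddSubgroup.mem_bot] at hx
    subst hx
    exact hb0l y
  obtain ⟨⟨L, hLiso⟩, hLmax⟩ :=
    Finite.exists_max
      (fun L : {L : AddSubgroup G // ∀ x ∈ L, ∀ y ∈ L, b x y = 1} => Nat.card L.1)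
  set P : AddSubgroup G := perpSub b hb_left L with hPdef
  have hmemP : ∀ g : G, g ∈ P ↔ ∀ h ∈ L, b g h = 1 := fun g => Iff.rfl
  have hLP : L ≤ P := by
    intro x hx
    rw [hmemP]
    intro h hh
    exact hLiso x hx h hh
  -- maximality: any isotropic vector in P lies in L
  have hmax : ∀ z : G, z ∈ P → b z z = 1 → z ∈ L := by
    intro z hzP hbzz
    have hzP' : ∀ h ∈ L, b z h = 1 := (hmemP z).mp hzP
    set M : AddSubgroup G := L ⊔ AddSubgroup.zmultiples z with hM
    have hMiso : ∀ x ∈ M, ∀ y ∈ M, b x y = 1 := by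
      intro x hx y hy
      rw [hM, AddSubgroup.mem_sup] at hx hy
      obtain ⟨l, hl, u, hu, rfl⟩ := hx
      obtain ⟨l', hl', v, hv, rfl⟩ := hy
      rw [AddSubgroup.mem_zmultiples_iff] at hu hv
      obtain ⟨mi, rfl⟩ := hu
      obtain ⟨ni, rfl⟩ := hv
      have hzl' : b z l' = 1 := hzP' l' hl'
      have hlz : b l z = 1 := by rw [hb_symm]; exact hzP' l hl
      simp [hb_left, hb_right, hintl, hintr, hLiso l hl l' hl', hzl', hlz, hbzz]
    have hLM : L ≤ M := le_sup_left
    have hcard : Nat.card M ≤ Nat.card L := hLmax ⟨M, hMiso⟩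
    have hsetEq : (L : Set G) = (M : Set G) := by
      apply Set.eq_of_subset_of_ncard_le hLM
      rw [← Nat.card_coe_set_eq, ← Nat.card_coe_set_eq]
      exact hcard
    have hzM : z ∈ M := by
      rw [hM]
      exact AddSubgroup.mem_sup_right (AddSubgroup.mem_zmultiples z)
    have : z ∈ (L : Set G) := by rw [hsetEq]; exact hzM
    exact this
  -- quotient H = P / L
  set L' : AddSubgroup P := L.addSubgroupOf P with hL'
  have hmk0 : ∀ w : P, ((QuotientAddGroup.mk w : P ⧸ L') = 0) ↔ (w : G) ∈ L := by
    intro w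
    rw [QuotientAddGroup.eq_zero_iff]
    exact AddSubgroup.mem_addSubgroupOf
  have hHdvd : Nat.card (P ⧸ L') ∣ 2 ^ m := by
    have h1 : Nat.card P = Nat.card (P ⧸ L') * Nat.card L' :=
      AddSubgroup.card_eq_card_quotient_mul_card_addSubgroup L'
    have h2 : Nat.card P ∣ Nat.card G := AddSubgroup.card_addSubgroup_dvd_card P
    rw [← hm]
    exact dvd_trans ⟨Nat.card L', h1⟩ h2
  -- key claim
  have key : ∀ z : G, ∀ hzP : z ∈ P, z ∉ L → ((2 : ℕ) • z ∈ L ∧ b z z = -1) := by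
    intro z hzP hzL
    have hzP' : ∀ h ∈ L, b z h = 1 := (hmemP z).mp hzP
    set zb : P ⧸ L' := QuotientAddGroup.mk (⟨z, hzP⟩ : P) with hzb
    have hsmul_mem : ∀ j : ℕ, j • zb = 0 ↔ j • z ∈ L := by
      intro j
      have h1 : j • zb = QuotientAddGroup.mk (j • (⟨z, hzP⟩ : P)) :=
        (QuotientAddGroup.mk_nsmul L' (⟨z, hzP⟩ : P) j).symm
      rw [h1, hmk0]
      constructor
      · intro h; simpa using h
      · intro h; simpa using h
    set n := addOrderOf zb with hn
    have hnd : n ∣ 2 ^ m := dvd_trans (addOrderOf_dvd_natCard zb) hHdvd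
    obtain ⟨i, him, hni⟩ := (Nat.dvd_prime_pow Nat.prime_two).mp hnd
    have hzb0 : zb ≠ 0 := by
      intro h
      exact hzL ((hmk0 _).mp h)
    have hnsmulL : n • z ∈ L := (hsmul_mem n).mp (addOrderOf_nsmul_eq_zero zb)
    have hbzn : b z z ^ n = 1 := by
      have h1 := hzP' (n • z) hnsmulL
      rw [hnatr] at h1
      exact h1
    have hbzzne : b z z ≠ 1 := fun h => hzL (hmax z hzP h)
    have hipos : 1 ≤ i := by
      by_contra h
      have hi0 : i = 0 := by omega
      rw [hi0, pow_zero] at hni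
      exact hzb0 ((AddMonoid.addOrderOf_eq_one_iff.mp hni))
    have hi1 : i = 1 := by
      by_contra hne'
      have hi2 : 2 ≤ i := by omega
      set w := 2 ^ (i - 1) • z with hw
      have hwP : w ∈ P := AddSubgroup.nsmul_mem P hzP _
      have hwL : w ∉ L := by
        intro hwL'
        have h0 : (2 ^ (i - 1)) • zb = 0 := (hsmul_mem _).mpr hwL'
        have hdvd' : n ∣ 2 ^ (i - 1) := addOrderOf_dvd_of_nsmul_eq_zero h0
        rw [hni] at hdvd'
        have hle := (Nat.pow_dvd_pow_iff_le_right (by norm_num : 1 < 2)).mp hdvd'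
        omega
      have hbw : b w w = 1 := by
        have h1 : b w w = b z z ^ (2 ^ (i - 1) * 2 ^ (i - 1)) := by
          rw [hw, hnatl, hnatr, ← pow_mul]
        have h3 : 2 ^ (i - 1) * 2 ^ (i - 1) = 2 ^ i * 2 ^ (i - 2) := by
          rw [← pow_add, ← pow_add]
          congr 1
          omega
        rw [h1, h3, ← hni, pow_mul, hbzn, one_pow]
      exact hwL (hmax w hwP hbw)
    have hn2 : n = 2 := by rw [hni, hi1, pow_one]
    have h2zL : (2 : ℕ) • z ∈ L := by rw [← hn2]; exact hnsmulL
    have hsq : b z z ^ 2 = 1 := by rw [← hn2]; exact hbzn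
    refine ⟨h2zL, ?_⟩
    have hk : ((b z z : k)) * (b z z : k) = 1 := by
      have h1 := congrArg (Units.val) hsq
      rw [Units.val_pow_eq_pow_val, Units.val_one, pow_two] at h1
      exact h1
    rcases mul_self_eq_one_iff.mp hk with h1 | h1
    · exact absurd (Units.ext (by simpa using h1)) hbzzne
    · exact Units.ext (by simpa using h1)
  have hbneg2 : (-1 : kˣ) ≠ 1 := by
    intro h
    have h1 := congrArg (Units.val) h
    rw [Units.val_neg, Units.val_one] at h1
    norm_num at h1
  -- any two nonzero elements of P/L are equal
  have huniq : ∀ a c : P ⧸ L', a ≠ 0 → c ≠ 0 → a = c := by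
    intro a c ha hc
    obtain ⟨x, rfl⟩ := QuotientAddGroup.mk_surjective a
    obtain ⟨y, rfl⟩ := QuotientAddGroup.mk_surjective c
    have hxL : (x : G) ∉ L := fun h => ha ((hmk0 x).mpr h)
    have hyL : (y : G) ∉ L := fun h => hc ((hmk0 y).mpr h)
    by_contra hne'
    have hxyL : ((x : G) - (y : G)) ∉ L := by
      intro h
      apply hne'
      rw [QuotientAddGroup.eq, AddSubgroup.mem_addSubgroupOf]
      have hcoe : (((-x + y : P)) : G) = -((x : G) - (y : G)) := by push_cast; abel
      rw [hcoe]
      exact neg_mem h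
    obtain ⟨h2x, hbx⟩ := key (x : G) x.2 hxL
    obtain ⟨h2y, hby⟩ := key (y : G) y.2 hyL
    have hxyP : ((x : G) - (y : G)) ∈ P := sub_mem x.2 y.2
    obtain ⟨h2xy, hbxy⟩ := key _ hxyP hxyL
    have hx2 : ∀ h ∈ L, b (x : G) h = 1 := (hmemP _).mp x.2
    have hxy2 : b (x : G) (y : G) * b (x : G) (y : G) = 1 := by
      have hyy : ((y : G) + (y : G)) ∈ L := by
        rw [two_nsmul] at h2y
        exact h2y
      have h1 : b (x : G) ((y : G) + (y : G)) = 1 := hx2 _ hyy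
      rw [hb_right] at h1
      exact h1
    have hcalc : b ((x : G) - (y : G)) ((x : G) - (y : G)) = 1 := by
      have hA : b (x : G) (-(y : G)) = (b (x : G) (y : G))⁻¹ := hnegr _ _
      have hB : b (-(y : G)) (x : G) = (b (x : G) (y : G))⁻¹ := by
        rw [hnegl, hb_symm]
      have hC : b (-(y : G)) (-(y : G)) = b (y : G) (y : G) := by
        rw [hnegl, hnegr, inv_inv]
      have hD : (b (x : G) (y : G))⁻¹ = b (x : G) (y : G) :=
        inv_eq_of_mul_eq_one_right hxy2
      rw [sub_eq_add_neg, hb_left, hb_right, hb_right, hA, hB, hC, hD, hbx, hby]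
      rw [neg_one_mul, mul_neg_one, neg_mul_neg, hxy2]
    rw [hcalc] at hbxy
    exact hbneg2 hbxy.symm
  have hcardH : Nat.card (P ⧸ L') ≤ 2 := by
    have hinj : Function.Injective
        (fun a : P ⧸ L' => if a = 0 then (0 : Fin 2) else 1) := by
      intro a c h
      by_cases ha : a = 0 <;> by_cases hc : c = 0
      · rw [ha, hc]
      · simp [ha, hc] at h
      · simp [ha, hc] at h
      · exact huniq a c ha hc
    calc Nat.card (P ⧸ L') ≤ Nat.card (Fin 2) := Nat.card_le_card_of_injective _ hinj
      _ = 2 := by simp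
  refine ⟨L, ?_, ?_⟩
  · intro g hg h hh
    exact hLiso g hg h hh
  · have hEq : Nat.card {g : G // ∀ h ∈ L, b g h = 1} = Nat.card P :=
      Nat.card_congr (Equiv.subtypeEquivRight (fun g => (hmemP g).symm))
    rw [hEq]
    have h1 : Nat.card P = Nat.card (P ⧸ L') * Nat.card L' :=
      AddSubgroup.card_eq_card_quotient_mul_card_addSubgroup L'
    have h2' : Nat.card L' = Nat.card L :=
      Nat.card_congr (AddSubgroup.addSubgroupOfEquivOfLe hLP).toEquiv
    rw [h1, h2']
    exact Nat.mul_le_mul_right _ hcardH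
end

section
/- Let (G,q) be a slightly degenerate pre-metric group and let u be the nontrivial element of Ker b. Then there exists a subgroup M ⊆ G such that (M, q|_M) is a metric group, the map M × Ker b → G, (m,x) ↦ m + x, is a group isomorphism, and q(m+x) = q(m)·q(x) for all m ∈ M and x ∈ Ker b. In other words, (G,q) is the orthogonal direct sum of a metric group and the pre-metric group (ℤ/2ℤ, n ↦ (-1)ⁿ). -/
lemma zmod2_cases : ∀ a : ZMod 2, a = 0 ∨ a = 1 := by decide

lemma zmod2_ne0 {a : ZMod 2} (h : a ≠ 0) : a = 1 := (zmod2_cases a).resolve_left h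

lemma zmod2_add_self : (1 : ZMod 2) + 1 = 0 := by decide

/-- A slightly degenerate pre-metric group `(G,q)` (i.e. `Ker b = {0,u}`
with `u ≠ 0` and `q(u) = -1`) is the orthogonal direct sum of a metric group `M` and
`Ker b ≅ (ℤ/2ℤ, n ↦ (-1)ⁿ)`: there is a subgroup `M ⊆ G` such that `(M, q|_M)` is a
metric group, `(m,x) ↦ m + x` is a bijection `M × Ker b → G`, and
`q(m + x) = q(m)·q(x)` for `m ∈ M`, `x ∈ Ker b`. -/
theorem slightly_degenerate_orthogonal_splitting
    {k : Type*} [Field k] [IsAlgClosed k] [CharZero k]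
    {G : Type*} [AddCommGroup G] [Finite G]
    (q : G → kˣ) (hq : IsQuadForm q)
    (u : G) (hu : u ≠ 0) (hu_ker : ∀ h : G, bchar q u h = 1) (hqu : q u = -1)
    (hker : ∀ g : G, (∀ h : G, bchar q g h = 1) → g = 0 ∨ g = u) :
    ∃ M : AddSubgroup G,
      IsQuadForm (fun m : ↥M => q (m : G)) ∧
      Nondeg (fun m : ↥M => q (m : G)) ∧
      Function.Bijective
        (fun mx : ↥M × {x : G // ∀ h : G, bchar q x h = 1} =>
          (mx.1 : G) + (mx.2 : G)) ∧
      (∀ (m : ↥M) (x : G), (∀ h : G, bchar q x h = 1) → q ((m : G) + x) = q (m : G) * q x) := by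
  classical
  -- basic lemmas about bchar
  have hsymm : ∀ g h : G, bchar q g h = bchar q h g := by
    intro g h
    unfold bchar
    rw [add_comm g h, mul_right_comm]
  have hb0 : ∀ h : G, bchar q 0 h = 1 := by
    intro h
    have h1 : bchar q (0 + 0) h = bchar q 0 h * bchar q 0 h := hq.bchar_add_left 0 0 h
    rw [add_zero] at h1
    have h2 : bchar q 0 h * 1 = bchar q 0 h * bchar q 0 h := by rw [mul_one]; exact h1
    exact (mul_left_cancel h2).symm
  have hbneg : ∀ g h : G, bchar q (-g) h = (bchar q g h)⁻¹ := by
    intro g h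
    have h1 : bchar q g h * bchar q (-g) h = 1 := by
      rw [← hq.bchar_add_left, add_neg_cancel, hb0]
    exact eq_inv_of_mul_eq_one_right h1
  have horth : ∀ (g x : G), (∀ h : G, bchar q x h = 1) → q (g + x) = q g * q x := by
    intro g x hx
    have h1 : q (g + x) * (q g)⁻¹ * (q x)⁻¹ = 1 := by
      have h0 := hsymm g x
      rw [hx g] at h0
      exact h0
    have h2 : q (g + x) * (q g)⁻¹ = q x := mul_inv_eq_one.mp h1
    have h3 : q (g + x) = q x * q g := mul_inv_eq_iff_eq_mul.mp h2
    rw [h3, mul_comm]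
  -- u + u = 0
  have huu : u + u = 0 := by
    have hmem : ∀ h : G, bchar q (u + u) h = 1 := fun h => by
      rw [hq.bchar_add_left, hu_ker, one_mul]
    rcases hker _ hmem with h | h
    · exact h
    · exfalso
      apply hu
      have h' : u + u = u + 0 := by rw [add_zero]; exact h
      exact add_left_cancel h'
  -- u is not a double
  have hu_not_double : ∀ g : G, g + g ≠ u := by
    intro g hg
    have h4 : g + g + (g + g) = 0 := by rw [hg]; exact huu
    have hgu : g + u = -g := by
      rw [← hg]
      have h5 : g + (g + g) + g = 0 := by rw [← h4]; abel
      exact eq_neg_of_add_eq_zero_left h5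
    have h6 : q (g + u) = q g * q u := horth g u hu_ker
    rw [hgu, hq.map_neg, hqu] at h6
    -- q g = q g * (-1), contradiction in char 0
    have h7 : (1 : kˣ) = -1 := mul_left_cancel (a := q g) (by rw [mul_one]; exact h6)
    have h8 : (1 : k) = -1 := by
      have h9 := congrArg Units.val h7
      simpa using h9
    have h10 : (2 : k) = 0 := by linear_combination h8
    exact two_ne_zero h10
  -- the doubling homomorphism and its range
  let doub : G →+ G := AddMonoidHom.mk' (fun g => g + g) (fun a b => add_add_add_comm a b a b)
  let H : AddSubgroup G := doub.range
  have hH2 : ∀ x : G, 2 • x ∈ H := fun x => ⟨x, (two_nsmul x).symm⟩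
  letI : Module (ZMod 2) (G ⧸ H) := QuotientAddGroup.zmodModule hH2
  haveI : Fact (Nat.Prime 2) := ⟨Nat.prime_two⟩
  have hu_mem : u ∉ H := by
    rintro ⟨g, hg⟩
    exact hu_not_double g hg
  have hu_ne : (QuotientAddGroup.mk u : G ⧸ H) ≠ 0 := by
    rwa [ne_eq, QuotientAddGroup.eq_zero_iff]
  have hex : ¬ ∀ φ : Module.Dual (ZMod 2) (G ⧸ H), φ (QuotientAddGroup.mk u) = 0 :=
    fun h => hu_ne ((Module.forall_dual_apply_eq_zero_iff (ZMod 2) _).mp h)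
  obtain ⟨φ, hφ⟩ := not_forall.mp hex
  have hφu : φ (QuotientAddGroup.mk u) = 1 := by
    exact zmod2_ne0 hφ
  -- the homomorphism Φ : G →+ ZMod 2 and its kernel M
  let Φ : G →+ ZMod 2 := φ.toAddMonoidHom.comp (QuotientAddGroup.mk' H)
  have hΦu : Φ u = 1 := hφu
  refine ⟨Φ.ker, ?_, ?_, ⟨?_, ?_⟩, fun m x hx => horth m x hx⟩
  · -- IsQuadForm on the restriction
    constructor
    · intro g; exact hq.map_neg (g : G)
    · intro g₁ g₂ h; exact hq.bchar_add_left (g₁ : G) (g₂ : G) (h : G)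
    · intro g h₁ h₂; exact hq.bchar_add_right (g : G) (h₁ : G) (h₂ : G)
  · -- Nondeg on the restriction
    intro a b hab
    have hab' : ∀ m : ↥Φ.ker, bchar q (a : G) (m : G) = bchar q (b : G) (m : G) :=
      fun m => congrFun hab m
    -- the difference d := a - b lies in ker b, hence is 0 or u; it's in M, so 0
    set d : G := (a : G) - (b : G) with hd
    have hdm : ∀ m : ↥Φ.ker, bchar q d m = 1 := by
      intro m
      have : bchar q d m = bchar q (a : G) (m : G) * (bchar q (b : G) (m : G))⁻¹ := by
        rw [hd, sub_eq_add_neg, hq.bchar_add_left, hbneg]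
      rw [this, hab' m, mul_inv_cancel]
    have hdker : ∀ h : G, bchar q d h = 1 := by
      intro h
      rcases zmod2_cases (Φ h) with h0 | h1
      · exact hdm ⟨h, h0⟩
      · have hmem : Φ (h + u) = 0 := by
          rw [map_add, h1, hΦu]; exact zmod2_add_self
        have := hdm ⟨h + u, hmem⟩
        have hsplit : bchar q d ((h + u) + u) = 1 := by
          rw [hq.bchar_add_right, this, one_mul, hsymm, hu_ker]
        rwa [add_assoc, huu, add_zero] at hsplit
    rcases hker d hdker with h0 | hu'
    · exact Subtype.ext (sub_eq_zero.mp h0)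
    · exfalso
      have hdM : Φ d = 0 := by
        rw [hd, map_sub, a.prop, b.prop, sub_zero]
      rw [hu'] at hdM
      rw [hΦu] at hdM
      exact one_ne_zero hdM
  · -- injectivity
    rintro ⟨m, x⟩ ⟨m', x'⟩ hmx
    simp only [Prod.mk.injEq] at hmx ⊢
    have hval : (m : G) + (x : G) = (m' : G) + (x' : G) := hmx
    have hxx : (x : G) = (x' : G) := by
      have hΦeq : Φ ((m : G) + (x : G)) = Φ ((m' : G) + (x' : G)) := by rw [hval]
      rw [map_add, map_add, m.prop, m'.prop, zero_add, zero_add] at hΦeq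
      rcases hker _ x.prop with h0 | h1 <;> rcases hker _ x'.prop with h0' | h1'
      · rw [h0, h0']
      · exfalso; rw [h0, h1', map_zero, hΦu] at hΦeq; exact one_ne_zero hΦeq.symm
      · exfalso; rw [h1, h0', map_zero, hΦu] at hΦeq; exact one_ne_zero hΦeq
      · rw [h1, h1']
    have hmm : (m : G) = (m' : G) := by
      rw [hxx] at hval
      exact add_right_cancel hval
    exact ⟨Subtype.ext hmm, Subtype.ext hxx⟩
  · -- surjectivity
    intro g
    rcases zmod2_cases (Φ g) with h0 | h1
    · exact ⟨⟨⟨g, h0⟩, ⟨0, fun h => hb0 h⟩⟩, by simp⟩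
    · have hmem : Φ (g + u) = 0 := by rw [map_add, h1, hΦu]; exact zmod2_add_self
      refine ⟨⟨⟨g + u, hmem⟩, ⟨u, hu_ker⟩⟩, ?_⟩
      show (g + u) + u = g
      rw [add_assoc, huu, add_zero]
end

section
/- Fix a square root i ∈ k of -1. There are, up to isomorphism of pre-metric groups, exactly two degenerate anisotropic pre-metric groups (G,q) with |G| a power of 2, namely: (ℤ/2ℤ, n ↦ (-1)ⁿ) and ((ℤ/2ℤ)², (m,n) ↦ i^{m̄}·(-1)^{n̄}), where m̄, n̄ ∈ {0,1} denote the representatives of m, n. (Replacing i by -i in the second example yields an isomorphic pre-metric group, so the classification does not depend on the choice of i.) -/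
/-- The quadratic form `n ↦ (-1)ⁿ` on `ℤ/2ℤ`. -/
def qA {k : Type*} [Field k] : ZMod 2 → kˣ :=
  fun n => (-1 : kˣ) ^ n.val

/-- The quadratic form `(m,n) ↦ i^m · (-1)ⁿ` on `(ℤ/2ℤ)²`. -/
def qB {k : Type*} [Field k] (i : kˣ) : ZMod 2 × ZMod 2 → kˣ :=
  fun mn => i ^ mn.1.val * (-1 : kˣ) ^ mn.2.val

namespace Aux14

/-! ### Small computation facts -/

lemma e11 : (1 + 1 : ZMod 2) = 0 := by decide
lemma v0 : (0 : ZMod 2).val = 0 := rfl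
lemma v1 : (1 : ZMod 2).val = 1 := rfl
lemma h2cases : ∀ g : ZMod 2, g = 0 ∨ g = 1 := by decide
lemma hneg2 : ∀ g : ZMod 2, -g = g := by decide
lemma hneg22 : ∀ g : ZMod 2 × ZMod 2, -g = g := by decide

section units
variable {k : Type*} [Field k]

lemma inv_negone : ((-1 : kˣ))⁻¹ = -1 :=
  inv_eq_of_mul_eq_one_right (by rw [neg_mul_neg, mul_one])

lemma inv_i (i : kˣ) (hi : i ^ 2 = -1) : i⁻¹ = -i :=
  inv_eq_of_mul_eq_one_right (by rw [mul_neg, ← sq, hi, neg_neg])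

lemma unit_sq_one {x : kˣ} (h : x * x = 1) : x = 1 ∨ x = -1 := by
  have hk : (x : k) * x = 1 := by
    have := congrArg Units.val h; rw [Units.val_mul, Units.val_one] at this; exact this
  rcases mul_self_eq_one_iff.mp hk with h' | h'
  · exact Or.inl (Units.ext (by simpa using h'))
  · exact Or.inr (Units.ext (by rw [Units.val_neg, Units.val_one]; exact h'))

lemma unit_sq_eq (i : kˣ) (hi : i ^ 2 = -1) {x : kˣ} (h : x * x = -1) : x = i ∨ x = -i := by
  have hxk : (x : k) * x = -1 := by
    have := congrArg Units.val h; rw [Units.val_mul, Units.val_neg, Units.val_one] at this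
    exact this
  have hik : (i : k) * i = -1 := by
    have := congrArg Units.val hi; rw [Units.val_pow_eq_pow_val, Units.val_neg, Units.val_one] at this
    rw [← sq]; exact this
  have hk : ((x : k) - i) * ((x : k) + i) = 0 := by linear_combination hxk - hik
  rcases mul_eq_zero.mp hk with h' | h'
  · exact Or.inl (Units.ext (sub_eq_zero.mp h'))
  · refine Or.inr (Units.ext ?_)
    rw [Units.val_neg]
    linear_combination h'

variable [CharZero k]

lemma neg_one_ne_one_units : (-1 : kˣ) ≠ 1 := by
  intro h
  have := congrArg Units.val h
  rw [Units.val_neg, Units.val_one] at this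
  have h2 : (2 : k) = 0 := by linear_combination -this
  exact two_ne_zero h2

lemma unit_ne_neg_self (x : kˣ) : x ≠ -x := by
  intro h
  have hk := congrArg Units.val h
  rw [Units.val_neg] at hk
  have h2 : (2 : k) * x = 0 := by linear_combination hk
  rcases mul_eq_zero.mp h2 with h3 | h3
  · exact two_ne_zero h3
  · exact x.ne_zero h3

lemma i_ne_one (i : kˣ) (hi : i ^ 2 = -1) : i ≠ 1 := by
  intro h; rw [h, one_pow] at hi; exact neg_one_ne_one_units hi.symm

lemma neg_i_ne_one (i : kˣ) (hi : i ^ 2 = -1) : -i ≠ 1 := by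
  intro h
  have : i = -1 := by rw [← neg_neg i, h]
  rw [this, neg_one_sq] at hi
  exact neg_one_ne_one_units hi.symm

end units

/-! ### General pre-metric group lemmas -/

section basic
variable {k : Type*} [Field k] {G : Type*} [AddCommGroup G] {q : G → kˣ}

lemma bchar_zero_left (hq : IsQuadForm q) (h : G) : bchar q 0 h = 1 := by
  have := hq.bchar_add_left 0 0 h
  rw [add_zero] at this
  exact right_eq_mul.mp this

lemma q_zero (hq : IsQuadForm q) : q (0 : G) = 1 := by
  have h := bchar_zero_left hq (0 : G)
  unfold bchar at h
  rw [add_zero] at h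
  have h2 : q (0 : G) * (q 0)⁻¹ * (q 0)⁻¹ = (q 0)⁻¹ := by
    apply Units.ext; push_cast; field_simp
  rw [h2] at h
  simpa using congrArg (·⁻¹) h

lemma q_add (hq : IsQuadForm q) (g h : G) : q (g + h) = q g * q h * bchar q g h := by
  unfold bchar
  apply Units.ext; push_cast; field_simp

lemma bchar_comm (g h : G) : bchar q g h = bchar q h g := by
  unfold bchar; rw [add_comm, mul_right_comm]

lemma exists_radical (hq : IsQuadForm q) (hnd : ¬ Nondeg q) :
    ∃ r : G, r ≠ 0 ∧ ∀ h, bchar q r h = 1 := by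
  rw [Nondeg, Function.not_injective_iff] at hnd
  obtain ⟨a, b, hab, hne⟩ := hnd
  refine ⟨a - b, sub_ne_zero.mpr hne, fun h => ?_⟩
  have h1 := hq.bchar_add_left b (a - b) h
  rw [show b + (a - b) = a by abel] at h1
  have h2 : bchar q a h = bchar q b h := congrFun hab h
  rw [h2] at h1
  exact left_eq_mul.mp h1

lemma mul_shuffle (a b c : kˣ) : (a * b * c) * (a * b * c) = (a * a) * (b * b) * (c * c) := by
  apply Units.ext; push_cast; ring

lemma nsmul_mod_two (x : G) (hx : x + x = 0) (a : ℕ) : (a % 2) • x = a • x := by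
  conv_rhs => rw [← Nat.div_add_mod a 2]
  rw [add_nsmul, mul_comm, mul_smul, two_nsmul, hx, smul_zero, zero_add]

end basic

/-! ### The two model quadratic forms -/

section models
variable {k : Type*} [Field k]

lemma qA0 : qA (k := k) 0 = 1 := by simp [qA, v0]
lemma qA1 : qA (k := k) 1 = -1 := by simp [qA, v1]

lemma bcharA (g h : ZMod 2) : bchar (qA (k := k)) g h = 1 := by
  rcases h2cases g with rfl | rfl <;> rcases h2cases h with rfl | rfl <;>
    simp [bchar, e11, qA0, qA1, inv_negone]

lemma isQuadForm_qA : IsQuadForm (qA (k := k)) := by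
  refine ⟨fun g => by rw [hneg2], fun g₁ g₂ h => ?_, fun g h₁ h₂ => ?_⟩ <;>
    rw [bcharA, bcharA, bcharA, mul_one]


lemma qB00 (i : kˣ) : qB i (0, 0) = 1 := by simp [qB, v0]
lemma qB10 (i : kˣ) : qB i (1, 0) = i := by simp [qB, v0, v1]
lemma qB01 (i : kˣ) : qB i (0, 1) = -1 := by simp [qB, v0, v1]
lemma qB11 (i : kˣ) : qB i (1, 1) = -i := by simp [qB, v0, v1]

lemma qB_bchar (i : kˣ) (hi : i ^ 2 = -1) : ∀ p p' : ZMod 2 × ZMod 2,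
    bchar (qB i) p p' = (-1) ^ (p.1.val * p'.1.val) := by
  have hii : i * i = -1 := by rw [← sq]; exact hi
  rintro ⟨a, b⟩ ⟨c, d⟩
  rcases h2cases a with rfl | rfl <;> rcases h2cases b with rfl | rfl <;>
    rcases h2cases c with rfl | rfl <;> rcases h2cases d with rfl | rfl <;>
    simp only [bchar, Prod.mk_add_mk, e11, add_zero, zero_add, v0, v1, mul_zero, zero_mul,
        one_mul, mul_one, pow_zero, pow_one, qB00, qB10, qB01, qB11, inv_i i hi, inv_negone,
        inv_one, inv_neg, neg_mul_neg, neg_neg, hii] <;>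
    first
        | rfl
        | (rw [hii])
        | simp [hii, neg_mul, mul_neg, neg_neg]

lemma isQuadForm_qB (i : kˣ) (hi : i ^ 2 = -1) : IsQuadForm (qB i) := by
  have key : ∀ a b c : ZMod 2,
      ((-1 : kˣ)) ^ ((a + b).val * c.val) = (-1) ^ (a.val * c.val) * (-1) ^ (b.val * c.val) := by
    intro a b c
    rcases h2cases a with rfl | rfl <;> rcases h2cases b with rfl | rfl <;>
      rcases h2cases c with rfl | rfl <;> simp [e11, v0, v1]
  refine ⟨fun g => by rw [hneg22], fun g₁ g₂ h => ?_, fun g h₁ h₂ => ?_⟩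
  · rw [qB_bchar i hi, qB_bchar i hi, qB_bchar i hi, Prod.fst_add, key]
  · rw [qB_bchar i hi, qB_bchar i hi, qB_bchar i hi, Prod.fst_add, mul_comm (g.1.val),
      mul_comm (g.1.val), mul_comm (g.1.val), key]

end models

/-! ### The classification -/

section classify
variable {k : Type*} [Field k] [CharZero k]

lemma classify (i : kˣ) (hi : i ^ 2 = -1)
    (G : Type*) [AddCommGroup G] [Finite G] (q : G → kˣ)
    (hq : IsQuadForm q) (hnd : ¬ Nondeg q) (han : ∀ g : G, g ≠ 0 → q g ≠ 1)
    (hcard : ∃ m : ℕ, Nat.card G = 2 ^ m) :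
    PMIso q (qA (k := k)) ∨ PMIso q (qB i) := by
  obtain ⟨r, hr0, hrb⟩ := exists_radical hq hnd
  have hbrr : ∀ h : G, bchar q h r = 1 := fun h => by rw [bchar_comm]; exact hrb h
  have hqr2 : q r * q r = 1 := by
    have h1 : q (r + -r) = q r * q (-r) * bchar q r (-r) := q_add hq r (-r)
    rw [add_neg_cancel, hrb, mul_one, hq.map_neg, q_zero hq] at h1
    exact h1.symm
  have hqr : q r = -1 := (unit_sq_one hqr2).resolve_left (han r hr0)
  have hr2 : r + r = 0 := by
    by_contra hne
    have h1 : q (r + r) = q r * q r * bchar q r r := q_add hq r r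
    rw [hrb, mul_one, hqr2] at h1
    exact han _ hne h1
  have hnr : -r = r := neg_eq_of_add_eq_zero_left hr2
  have hqadd_r : ∀ g : G, q (g + r) = -(q g) := fun g => by
    rw [q_add hq g r, hbrr, mul_one, hqr, mul_neg_one]
  have huniq : ∀ y : G, y ≠ 0 → q y = -1 → y = r := by
    intro y hy0 hqy
    by_contra hyr
    have hy_r : y + r ≠ 0 := by
      intro hc
      exact hyr (by rw [← hnr]; exact eq_neg_of_add_eq_zero_left hc)
    have : q (y + r) = 1 := by rw [hqadd_r, hqy, neg_neg]
    exact han _ hy_r this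
  have hsq_b : ∀ g h : G, g + g = 0 → bchar q g h * bchar q g h = 1 := by
    intro g h hg
    have h1 := hq.bchar_add_left g g h
    rw [hg, bchar_zero_left hq] at h1
    exact h1.symm
  have key4 : ∀ x : G, (x + x) + (x + x) = 0 → x + x = 0 := by
    intro x h4
    by_contra hy0
    have hyx : (x + x) + x = -x := by
      apply eq_neg_of_add_eq_zero_left
      rw [show ((x + x) + x) + x = (x + x) + (x + x) by abel]
      exact h4
    have h1 : q ((x + x) + x) = q (x + x) * q x * bchar q (x + x) x := q_add hq (x + x) x
    rw [hyx, hq.map_neg, mul_right_comm] at h1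
    have h2 : q (x + x) * bchar q (x + x) x = 1 := right_eq_mul.mp h1
    have h3 : q (x + x) = (bchar q (x + x) x)⁻¹ := eq_inv_of_mul_eq_one_left h2
    have hq2 : q (x + x) * q (x + x) = 1 := by
      rw [h3, ← mul_inv, hsq_b (x + x) x h4, inv_one]
    have hqy : q (x + x) = -1 := (unit_sq_one hq2).resolve_left (han _ hy0)
    have hyr : x + x = r := huniq _ hy0 hqy
    have hxr2 : q (x + r) = q x := by
      have hxy : x + r = -x := by
        rw [← hyr]
        apply eq_neg_of_add_eq_zero_left
        rw [show (x + (x + x)) + x = (x + x) + (x + x) by abel]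
        exact h4
      rw [hxy, hq.map_neg]
    exact unit_ne_neg_self (q x) (hxr2.symm.trans (hqadd_r x))
  obtain ⟨m, hm⟩ := hcard
  have two_tors : ∀ x : G, x + x = 0 := by
    have aux : ∀ (n : ℕ) (x : G), (2 : ℕ) ^ n • x = 0 → x + x = 0 := by
      intro n
      induction n with
      | zero => intro x h; rw [pow_zero, one_smul] at h; rw [h, add_zero]
      | succ n ih =>
        intro x h
        refine key4 x (ih (x + x) ?_)
        rw [← two_nsmul, ← mul_smul, mul_comm, ← pow_succ']
        exact h
    intro x
    apply aux m
    have : Fintype G := Fintype.ofFinite G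
    rw [← hm, Nat.card_eq_fintype_card]
    exact card_nsmul_eq_zero
  have qg_sq : ∀ g : G, g ≠ 0 → g ≠ r → q g * q g = -1 := by
    intro g hg0 hgr
    have hg2 := two_tors g
    have hbgg : bchar q g g = (q g)⁻¹ * (q g)⁻¹ := by
      unfold bchar; rw [hg2, q_zero hq, one_mul]
    have hb2 := hsq_b g g hg2
    rw [hbgg] at hb2
    have hs : (q g * q g) * (q g * q g) = 1 := by
      have h1 := congrArg (·⁻¹) hb2
      simpa [mul_inv, inv_inv] using h1
    rcases unit_sq_one hs with h1 | h1
    · rcases unit_sq_one h1 with h2 | h2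
      · exact absurd h2 (han g hg0)
      · exact absurd (huniq g hg0 h2) hgr
    · exact h1
  have pair : ∀ g h : G, g ≠ 0 → g ≠ r → h ≠ 0 → h ≠ r → g + h = 0 ∨ g + h = r := by
    intro g h hg0 hgr hh0 hhr
    by_contra hc
    push_neg at hc
    have h1 : q (g + h) * q (g + h) = -1 := qg_sq _ hc.1 hc.2
    have h4 : q (g + h) * q (g + h) = 1 := by
      rw [q_add hq g h, mul_shuffle, qg_sq g hg0 hgr, qg_sq h hh0 hhr,
        hsq_b g h (two_tors g), mul_one, neg_mul_neg, one_mul]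
    exact neg_one_ne_one_units (h1.symm.trans h4)
  by_cases hall : ∀ x : G, x = 0 ∨ x = r
  · -- isomorphic to (ZMod 2, qA)
    left
    have fadd : ∀ a b : ZMod 2, ((a + b).val) • r = a.val • r + b.val • r := by
      intro a b
      rw [ZMod.val_add, nsmul_mod_two r hr2, add_nsmul]
    let f : ZMod 2 →+ G := AddMonoidHom.mk' (fun n => n.val • r) fadd
    have hf0 : f 0 = 0 := map_zero f
    have hf1 : f 1 = r := by show (1 : ZMod 2).val • r = r; rw [v1, one_nsmul]
    have hinj : Function.Injective f := by
      rw [injective_iff_map_eq_zero]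
      intro a ha
      rcases h2cases a with rfl | rfl
      · rfl
      · rw [hf1] at ha; exact absurd ha hr0
    have hsurj : Function.Surjective f := by
      intro x
      rcases hall x with rfl | rfl
      · exact ⟨0, hf0⟩
      · exact ⟨1, hf1⟩
    let e : ZMod 2 ≃+ G := AddEquiv.ofBijective f ⟨hinj, hsurj⟩
    have he : ∀ n, e n = f n := fun n => rfl
    refine ⟨e.symm, fun x => ?_⟩
    obtain ⟨n, rfl⟩ := hsurj x
    rw [← he, AddEquiv.symm_apply_apply]
    rcases h2cases n with rfl | rfl
    · rw [he, hf0, q_zero hq, qA0]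
    · rw [he, hf1, hqr, qA1]
  · -- isomorphic to ((ZMod 2)², qB i)
    right
    push_neg at hall
    obtain ⟨g0, hg00, hg0r⟩ := hall
    obtain ⟨g, hg0', hgr', hqg⟩ : ∃ g : G, g ≠ 0 ∧ g ≠ r ∧ q g = i := by
      rcases unit_sq_eq i hi (qg_sq g0 hg00 hg0r) with h | h
      · exact ⟨g0, hg00, hg0r, h⟩
      · refine ⟨g0 + r, ?_, ?_, ?_⟩
        · intro hc
          exact hg0r (by rw [← hnr]; exact eq_neg_of_add_eq_zero_left hc)
        · intro hc
          exact hg00 (by rwa [add_eq_right] at hc)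
        · rw [hqadd_r, h, neg_neg]
    have hg2 : g + g = 0 := two_tors g
    have hng : -g = g := neg_eq_of_add_eq_zero_left hg2
    have fadd : ∀ p p' : ZMod 2 × ZMod 2,
        ((p + p').1.val) • g + ((p + p').2.val) • r
          = (p.1.val • g + p.2.val • r) + (p'.1.val • g + p'.2.val • r) := by
      intro p p'
      rw [Prod.fst_add, Prod.snd_add, ZMod.val_add, ZMod.val_add, nsmul_mod_two g hg2,
        nsmul_mod_two r hr2, add_nsmul, add_nsmul]
      abel
    let f : ZMod 2 × ZMod 2 →+ G :=
      AddMonoidHom.mk' (fun p => p.1.val • g + p.2.val • r) fadd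
    have hf00 : f (0, 0) = 0 := by
      show (0 : ZMod 2).val • g + (0 : ZMod 2).val • r = 0
      rw [v0, zero_nsmul, zero_nsmul, add_zero]
    have hf10 : f (1, 0) = g := by
      show (1 : ZMod 2).val • g + (0 : ZMod 2).val • r = g
      rw [v0, v1, one_nsmul, zero_nsmul, add_zero]
    have hf01 : f (0, 1) = r := by
      show (0 : ZMod 2).val • g + (1 : ZMod 2).val • r = r
      rw [v0, v1, one_nsmul, zero_nsmul, zero_add]
    have hf11 : f (1, 1) = g + r := by
      show (1 : ZMod 2).val • g + (1 : ZMod 2).val • r = g + r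
      rw [v1, one_nsmul, one_nsmul]
    have hgr_ne : g + r ≠ 0 := by
      intro hc
      exact hgr' (by rw [← hnr]; exact eq_neg_of_add_eq_zero_left hc)
    have hinj : Function.Injective f := by
      rw [injective_iff_map_eq_zero]
      rintro ⟨a, b⟩ ha
      rcases h2cases a with rfl | rfl <;> rcases h2cases b with rfl | rfl
      · rfl
      · rw [hf01] at ha; exact absurd ha hr0
      · rw [hf10] at ha; exact absurd ha hg0'
      · rw [hf11] at ha; exact absurd ha hgr_ne
    have hsurj : Function.Surjective f := by
      intro x
      by_cases hx0 : x = 0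
      · exact ⟨(0, 0), by rw [hf00, hx0]⟩
      by_cases hxr : x = r
      · exact ⟨(0, 1), by rw [hf01, hxr]⟩
      rcases pair g x hg0' hgr' hx0 hxr with h | h
      · refine ⟨(1, 0), ?_⟩
        rw [hf10]
        have : x = -g := eq_neg_of_add_eq_zero_right h
        rw [this, hng]
      · refine ⟨(1, 1), ?_⟩
        rw [hf11]
        have h' : g + (g + r) = r := by rw [← add_assoc, hg2, zero_add]
        exact (add_left_cancel (h.trans h'.symm)).symm
    let e : ZMod 2 × ZMod 2 ≃+ G := AddEquiv.ofBijective f ⟨hinj, hsurj⟩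
    have he : ∀ p, e p = f p := fun p => rfl
    refine ⟨e.symm, fun x => ?_⟩
    obtain ⟨p, rfl⟩ := hsurj x
    rw [← he, AddEquiv.symm_apply_apply, he]
    obtain ⟨a, b⟩ := p
    rcases h2cases a with rfl | rfl <;> rcases h2cases b with rfl | rfl
    · rw [hf00, q_zero hq, qB00]
    · rw [hf01, hqr, qB01]
    · rw [hf10, hqg, qB10]
    · rw [hf11, hqadd_r, hqg, qB11]

end classify

section final
variable {k : Type*} [Field k] [CharZero k]

lemma not_nondeg_qA : ¬ Nondeg (qA (k := k)) := by
  intro hinj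
  have h : (fun h : ZMod 2 => bchar (qA (k := k)) 0 h)
      = (fun h : ZMod 2 => bchar (qA (k := k)) 1 h) :=
    funext fun h => by rw [bcharA, bcharA]
  have := hinj h
  exact absurd this (by decide)

lemma aniso_qA : ∀ g : ZMod 2, g ≠ 0 → qA (k := k) g ≠ 1 := by
  intro g hg
  rcases h2cases g with rfl | rfl
  · exact absurd rfl hg
  · rw [qA1]; exact neg_one_ne_one_units

lemma not_nondeg_qB (i : kˣ) (hi : i ^ 2 = -1) : ¬ Nondeg (qB i) := by
  intro hinj
  have h : (fun h : ZMod 2 × ZMod 2 => bchar (qB i) (0, 0) h)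
      = (fun h : ZMod 2 × ZMod 2 => bchar (qB i) (0, 1) h) :=
    funext fun h => by rw [qB_bchar i hi, qB_bchar i hi]
  have := hinj h
  exact absurd this (by decide)

lemma aniso_qB (i : kˣ) (hi : i ^ 2 = -1) : ∀ g : ZMod 2 × ZMod 2, g ≠ 0 → qB i g ≠ 1 := by
  rintro ⟨a, b⟩ hg
  rcases h2cases a with rfl | rfl <;> rcases h2cases b with rfl | rfl
  · exact absurd (by decide) hg
  · rw [qB01]; exact neg_one_ne_one_units
  · rw [qB10]; exact i_ne_one i hi
  · rw [qB11]; exact neg_i_ne_one i hi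

lemma not_pmiso (i : kˣ) : ¬ PMIso (qA (k := k)) (qB i) := by
  rintro ⟨φ, -⟩
  have := Nat.card_congr φ.toEquiv
  simp only [Nat.card_eq_fintype_card, ZMod.card, Fintype.card_prod] at this
  omega

lemma pmiso_neg (i : kˣ) : PMIso (qB i) (qB (-i)) := by
  refine ⟨⟨⟨fun p => (p.1, p.1 + p.2), fun p => (p.1, p.1 + p.2), by decide, by decide⟩,
    by decide⟩, ?_⟩
  rintro ⟨a, b⟩
  rcases h2cases a with rfl | rfl <;> rcases h2cases b with rfl | rfl
  · show qB (-i) (0, 0 + 0) = qB i (0, 0)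
    rw [add_zero, qB00, qB00]
  · show qB (-i) (0, 0 + 1) = qB i (0, 1)
    rw [zero_add, qB01, qB01]
  · show qB (-i) (1, 1 + 0) = qB i (1, 0)
    rw [add_zero, qB11, qB10, neg_neg]
  · show qB (-i) (1, 1 + 1) = qB i (1, 1)
    rw [e11, qB10, qB11]

end final
end Aux14

/-- Up to isomorphism there are exactly two degenerate anisotropic
pre-metric groups of `2`-power order, namely `(ℤ/2ℤ, (-1)ⁿ)` and
`((ℤ/2ℤ)², i^m·(-1)ⁿ)`; and replacing `i` by `-i` gives an isomorphic pre-metric group. -/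
theorem classification_degenerate_anisotropic_two_groups
    {k : Type*} [Field k] [IsAlgClosed k] [CharZero k]
    (i : kˣ) (hi : i ^ 2 = -1) :
    (IsQuadForm (qA (k := k)) ∧ ¬Nondeg (qA (k := k)) ∧
      (∀ g : ZMod 2, g ≠ 0 → qA (k := k) g ≠ 1) ∧
      (∃ m : ℕ, Nat.card (ZMod 2) = 2 ^ m)) ∧
    (IsQuadForm (qB i) ∧ ¬Nondeg (qB i) ∧
      (∀ g : ZMod 2 × ZMod 2, g ≠ 0 → qB i g ≠ 1) ∧
      (∃ m : ℕ, Nat.card (ZMod 2 × ZMod 2) = 2 ^ m)) ∧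
    ¬PMIso (qA (k := k)) (qB i) ∧
    (∀ (G : Type*) [AddCommGroup G] [Finite G] (q : G → kˣ),
      IsQuadForm q → ¬Nondeg q → (∀ g : G, g ≠ 0 → q g ≠ 1) →
      (∃ m : ℕ, Nat.card G = 2 ^ m) →
      PMIso q (qA (k := k)) ∨ PMIso q (qB i)) ∧
    PMIso (qB i) (qB (-i)) := by
  refine ⟨⟨Aux14.isQuadForm_qA, Aux14.not_nondeg_qA, Aux14.aniso_qA,
      ⟨1, by simp [Nat.card_eq_fintype_card]⟩⟩,
    ⟨Aux14.isQuadForm_qB i hi, Aux14.not_nondeg_qB i hi, Aux14.aniso_qB i hi,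
      ⟨2, by simp [Nat.card_eq_fintype_card]⟩⟩,
    Aux14.not_pmiso i,
    fun G _ _ q hq hnd han hcard => Aux14.classify i hi G q hq hnd han hcard,
    Aux14.pmiso_neg i⟩
end

section
/- Let A be a finite-dimensional *-algebra over ℂ with a positive trace l. Then for every idempotent e ∈ A with e ≠ 0 (i.e. e² = e), l(e) is a positive real number. -/
/-- Let `A` be a finite-dimensional `*`-algebra over `ℂ` with a
positive trace `l`. Then `l(e)` is a positive real number for every nonzero
idempotent `e ∈ A`. -/
theorem positive_trace_of_idempotent
    (A : Type*) [Ring A] [Algebra ℂ A] [StarRing A] [StarModule ℂ A]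
    [FiniteDimensional ℂ A]
    (l : A →ₗ[ℂ] ℂ)
    (htrace : ∀ a b : A, l (a * b) = l (b * a))
    (hstar : ∀ a : A, l (star a) = starRingEnd ℂ (l a))
    (hpos : ∀ a : A, a ≠ 0 → ∃ r : ℝ, 0 < r ∧ l (a * star a) = (r : ℂ))
    (e : A) (he : e * e = e) (hne : e ≠ 0) :
    ∃ r : ℝ, 0 < r ∧ l e = (r : ℂ) := by
  classical
  set f := star e with hf_def
  have hf : f * f = f := by
    rw [hf_def, ← star_mul]
    exact congrArg star he
  set s : A := e - f with hs_def
  have hs_star : star s = -s := by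
    simp [hs_def, hf_def, star_sub]
  set z : A := 1 + s * star s with hz_def
  have hz_expand : z = 1 - e - f + e * f + f * e := by
    rw [hz_def, hs_star, hs_def]
    rw [mul_neg, sub_mul, mul_sub, mul_sub, he, hf]
    abel
  have hz_star : star z = z := by
    rw [hz_def]
    simp [star_mul]
  -- commutation of z with e and f
  have h_ze : z * e = e * (f * e) := by
    rw [hz_expand]
    simp only [add_mul, sub_mul, one_mul, mul_assoc, he]
    abel
  have h_ez : e * z = e * (f * e) := by
    rw [hz_expand]
    simp only [mul_add, mul_sub, mul_one, ← mul_assoc, he]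
    abel
  have h_zez : z * e = e * z := by rw [h_ze, h_ez]
  have h_zfz : z * f = f * z := by
    have := congrArg star h_zez
    simpa [star_mul, hz_star, hf_def] using this.symm
  -- injectivity of left multiplication by z
  have hinj : ∀ a : A, z * a = 0 → a = 0 := by
    intro a ha
    by_contra hna
    obtain ⟨r1, hr1, hl1⟩ := hpos a hna
    have key : l (z * (a * star a)) = 0 := by
      rw [← mul_assoc, ha, zero_mul, map_zero]
    have hsplit : l (z * (a * star a)) =
        l (a * star a) + l (s * (star s * (a * star a))) := by
      rw [hz_def, add_mul, one_mul, map_add, mul_assoc]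
    have h2 : l (s * (star s * (a * star a))) =
        l ((star s * a) * star (star s * a)) := by
      rw [htrace s]
      congr 1
      rw [star_mul, star_star]
      noncomm_ring
    by_cases hsa : star s * a = 0
    · rw [hsplit, h2, hsa, zero_mul, map_zero, add_zero, hl1] at key
      exact absurd (by exact_mod_cast key) (ne_of_gt hr1)
    · obtain ⟨r2, hr2, hl2⟩ := hpos _ hsa
      rw [hsplit, h2, hl1, hl2] at key
      have : (r1 : ℂ) + (r2 : ℂ) = 0 := key
      have : r1 + r2 = 0 := by exact_mod_cast this
      linarith
  -- z is invertible
  have hinj' : Function.Injective (LinearMap.mulLeft ℂ z) := by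
    intro a b hab
    have : z * (a - b) = 0 := by
      rw [mul_sub, sub_eq_zero]
      exact hab
    have := hinj _ this
    exact sub_eq_zero.mp this
  obtain ⟨y, hy⟩ := (LinearMap.injective_iff_surjective.mp hinj') 1
  have hzy : z * y = 1 := hy
  have hyz : y * z = 1 := by
    have h0 : z * (y * z - 1) = 0 := by
      rw [mul_sub, ← mul_assoc, hzy, one_mul, mul_one, sub_self]
    exact sub_eq_zero.mp (hinj _ h0)
  have hy_star : star y = y := by
    calc star y = star y * (z * y) := by rw [hzy, mul_one]
    _ = (star y * star z) * y := by rw [← mul_assoc, hz_star]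
    _ = star (z * y) * y := by rw [star_mul]
    _ = y := by rw [hzy, star_one, one_mul]
  have hey : e * y = y * e := by
    calc e * y = (y * z) * (e * y) := by rw [hyz, one_mul]
    _ = y * ((z * e) * y) := by noncomm_ring
    _ = y * ((e * z) * y) := by rw [h_zez]
    _ = (y * e) * (z * y) := by noncomm_ring
    _ = y * e := by rw [hzy, mul_one]
  have hfy : f * y = y * f := by
    calc f * y = (y * z) * (f * y) := by rw [hyz, one_mul]
    _ = y * ((z * f) * y) := by noncomm_ring
    _ = y * ((f * z) * y) := by rw [h_zfz]
    _ = (y * f) * (z * y) := by noncomm_ring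
    _ = y * f := by rw [hzy, mul_one]
  set p : A := e * f * y with hp_def
  have hef_star : star (e * f) = e * f := by
    rw [star_mul, hf_def, star_star]
  have hyef : y * (e * f) = (e * f) * y := by
    calc y * (e * f) = (y * e) * f := by rw [mul_assoc]
    _ = (e * y) * f := by rw [hey]
    _ = e * (y * f) := by rw [mul_assoc]
    _ = e * (f * y) := by rw [hfy]
    _ = (e * f) * y := by rw [mul_assoc]
  have hp_star : star p = p := by
    rw [hp_def, star_mul, hy_star, hef_star, hyef]
  have hep : e * p = p := by
    rw [hp_def]
    calc e * (e * f * y) = (e * e) * f * y := by noncomm_ring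
    _ = e * f * y := by rw [he]
  have hefe : e * f * e = e * z := by rw [mul_assoc, ← h_ez]
  have hpe : p * e = e := by
    rw [hp_def]
    calc e * f * y * e = e * f * (y * e) := by rw [mul_assoc]
    _ = e * f * (e * y) := by rw [hey]
    _ = (e * f * e) * y := by noncomm_ring
    _ = e * (z * y) := by rw [hefe, mul_assoc]
    _ = e := by rw [hzy, mul_one]
  have hp2 : p * p = p := by
    rw [hp_def]
    calc (e * f * y) * (e * f * y) = (e * f) * (y * (e * f)) * y := by noncomm_ring
    _ = (e * f) * ((e * f) * y) * y := by rw [hyef]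
    _ = (e * f * e) * (f * (y * y)) := by noncomm_ring
    _ = e * (z * f) * (y * y) := by rw [hefe]; noncomm_ring
    _ = e * (f * z) * (y * y) := by rw [h_zfz]
    _ = (e * f) * ((z * y) * y) := by noncomm_ring
    _ = e * f * y := by rw [hzy, one_mul]
  have hp_ne : p ≠ 0 := by
    intro h0
    apply hne
    rw [← hpe, h0, zero_mul]
  obtain ⟨r, hr, hlr⟩ := hpos p hp_ne
  refine ⟨r, hr, ?_⟩
  have hle : l e = l p := by
    rw [← hpe, htrace, hep]
  rw [hle, ← hlr, hp_star, hp2]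
end

section
/- Let A be a finite-dimensional *-algebra over ℂ with a positive trace l. If a ∈ A satisfies l(aⁿ) = 0 for every integer n ≥ 1, then a is nilpotent. -/
open Submodule

section Aux

variable {A : Type*} [Ring A] [Algebra ℂ A] [StarRing A] [StarModule ℂ A]
  [FiniteDimensional ℂ A]

set_option linter.unusedSectionVars false

/-- Nonnegative version of positivity, including `w = 0`. -/
lemma aux_pos (l : A →ₗ[ℂ] ℂ)
    (hpos : ∀ a : A, a ≠ 0 → ∃ r : ℝ, 0 < r ∧ l (a * star a) = (r : ℂ)) (w : A) :
    ∃ r : ℝ, 0 ≤ r ∧ l (w * star w) = (r : ℂ) ∧ (r = 0 → w = 0) := by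
  by_cases hw : w = 0
  · exact ⟨0, le_refl 0, by simp [hw], fun _ => hw⟩
  · obtain ⟨r, hr, hlr⟩ := hpos w hw
    exact ⟨r, hr.le, hlr, fun h0 => absurd (h0 ▸ hr) (lt_irrefl 0)⟩

/-- In a finite-dimensional algebra, an element with trivial left-multiplication kernel
is invertible. -/
lemma aux_unit (h : A) (hinj : ∀ z : A, h * z = 0 → z = 0) :
    ∃ u : A, h * u = 1 ∧ u * h = 1 := by
  have hinj' : Function.Injective (LinearMap.mulLeft ℂ h) := by
    intro x y hxy
    have hxy' : h * x = h * y := hxy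
    have h0 : h * (x - y) = 0 := by rw [mul_sub, hxy', sub_self]
    exact sub_eq_zero.mp (hinj _ h0)
  obtain ⟨u, hu⟩ := LinearMap.surjective_of_injective hinj' 1
  have hu1 : h * u = 1 := hu
  refine ⟨u, hu1, ?_⟩
  have : h * (u * h - 1) = 0 := by
    rw [mul_sub, ← mul_assoc, hu1, one_mul, mul_one, sub_self]
  exact sub_eq_zero.mp (hinj _ this)

/-- A nonzero idempotent has nonzero trace. -/
lemma aux_idem (l : A →ₗ[ℂ] ℂ)
    (htrace : ∀ a b : A, l (a * b) = l (b * a))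
    (hpos : ∀ a : A, a ≠ 0 → ∃ r : ℝ, 0 < r ∧ l (a * star a) = (r : ℂ))
    (e : A) (he : e * e = e) (hne : e ≠ 0) : l e ≠ 0 := by
  have hse : star e * star e = star e := by rw [← star_mul, he]
  have he' : ∀ x : A, e * (e * x) = e * x := by
    intro x; rw [← mul_assoc, he]
  have hse' : ∀ x : A, star e * (star e * x) = star e * x := by
    intro x; rw [← mul_assoc, hse]
  set h : A := e * star e + (1 - star e) * (1 - e) with hh
  -- the kernel of left multiplication by `h` is trivial
  have hker : ∀ z : A, h * z = 0 → z = 0 := by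
    intro z hz
    obtain ⟨r₁, hr₁, hl₁, hz₁⟩ := aux_pos l hpos (star e * z)
    obtain ⟨r₂, hr₂, hl₂, hz₂⟩ := aux_pos l hpos ((1 - e) * z)
    have e1 : star z * (e * star e * z) = star (star e * z) * (star e * z) := by
      simp [star_mul, mul_assoc]
    have e2 : star z * ((1 - star e) * (1 - e) * z) = star ((1 - e) * z) * ((1 - e) * z) := by
      simp [star_mul, star_sub, mul_assoc]
    have expand : star z * (h * z) = star (star e * z) * (star e * z)
        + star ((1 - e) * z) * ((1 - e) * z) := by
      rw [hh, add_mul, mul_add, e1, e2]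
    have hzero : l (star (star e * z) * (star e * z))
        + l (star ((1 - e) * z) * ((1 - e) * z)) = 0 := by
      have h0 : l (star z * (h * z)) = 0 := by rw [hz, mul_zero, map_zero]
      rw [expand, map_add] at h0
      exact h0
    have key : (r₁ : ℂ) + (r₂ : ℂ) = 0 := by
      rw [← hl₁, ← hl₂, htrace (star e * z) (star (star e * z)),
        htrace ((1 - e) * z) (star ((1 - e) * z))]
      exact hzero
    have hsum : r₁ + r₂ = 0 := by exact_mod_cast key
    have w1 : star e * z = 0 := hz₁ (by linarith)
    have w2 : (1 - e) * z = 0 := hz₂ (by linarith)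
    have hez : e * z = z := by
      have := w2
      rw [sub_mul, one_mul, sub_eq_zero] at this
      exact this.symm
    obtain ⟨r₃, hr₃, hl₃, hz₃⟩ := aux_pos l hpos z
    have hzz : star z * z = 0 := by
      calc star z * z = star z * (e * z) := by rw [hez]
        _ = (star z * e) * z := by rw [mul_assoc]
        _ = star (star e * z) * z := by simp [star_mul]
        _ = 0 := by rw [w1, star_zero, zero_mul]
    have hr30 : (r₃ : ℂ) = 0 := by
      rw [← hl₃, htrace, hzz, map_zero]
    exact hz₃ (by exact_mod_cast hr30)
  obtain ⟨u, hu1, hu2⟩ := aux_unit h hker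
  have hstarh : star h = h := by
    rw [hh]
    simp [star_mul, star_sub, mul_assoc]
  have hstaru : star u = u := by
    calc star u = star u * (h * u) := by rw [hu1, mul_one]
      _ = (star u * h) * u := by rw [mul_assoc]
      _ = (star u * star h) * u := by rw [hstarh]
      _ = star (h * u) * u := by rw [star_mul]
      _ = u := by rw [hu1, star_one, one_mul]
  have hcommu : ∀ x : A, h * x = x * h → u * x = x * u := by
    intro x hx
    calc u * x = u * (x * (h * u)) := by rw [hu1, mul_one]
      _ = u * (x * h * u) := by rw [mul_assoc x h u]
      _ = u * (h * x * u) := by rw [← hx]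
      _ = u * h * (x * u) := by rw [mul_assoc h x u, ← mul_assoc u h (x * u)]
      _ = x * u := by rw [hu2, one_mul]
  have h_mul_e : h * e = e * star e * e := by
    rw [hh]
    simp only [mul_sub, sub_mul, mul_add, add_mul, mul_one, one_mul, mul_assoc,
      he, hse, he', hse']
    abel
  have e_mul_h : e * h = e * star e * e := by
    rw [hh]
    simp only [mul_sub, sub_mul, mul_add, add_mul, mul_one, one_mul, mul_assoc,
      he, hse, he', hse']
    abel
  have hE_mul_h : (e * star e) * h = (e * star e) * (e * star e) := by
    rw [hh]
    simp only [mul_sub, sub_mul, mul_add, add_mul, mul_one, one_mul, mul_assoc,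
      he, hse, he', hse']
    abel
  have h_mul_E : h * (e * star e) = (e * star e) * (e * star e) := by
    rw [hh]
    simp only [mul_sub, sub_mul, mul_add, add_mul, mul_one, one_mul, mul_assoc,
      he, hse, he', hse']
    abel
  have hue : u * e = e * u := hcommu e (by rw [h_mul_e, e_mul_h])
  have huE : u * (e * star e) = (e * star e) * u := hcommu _ (by rw [h_mul_E, hE_mul_h])
  set p : A := e * star e * u with hp
  have hpe : p * e = e := by
    calc p * e = e * star e * (u * e) := by rw [hp, mul_assoc]
      _ = e * star e * (e * u) := by rw [hue]
      _ = e * star e * e * u := by rw [← mul_assoc]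
      _ = e * (h * u) := by rw [← e_mul_h, mul_assoc]
      _ = e := by rw [hu1, mul_one]
  have hep : e * p = p := by
    rw [hp, ← mul_assoc, ← mul_assoc, he]
  have hpp : p * p = p := by
    calc p * p = e * star e * (u * (e * star e * u)) := by rw [hp, mul_assoc]
      _ = e * star e * (u * (e * star e) * u) := by rw [mul_assoc (u) (e * star e) u]
      _ = e * star e * ((e * star e) * u * u) := by rw [huE]
      _ = e * star e * ((e * star e) * (u * u)) := by rw [mul_assoc (e * star e) u u]
      _ = (e * star e) * (e * star e) * (u * u) := by rw [← mul_assoc]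
      _ = (e * star e) * h * (u * u) := by rw [hE_mul_h]
      _ = (e * star e) * (h * (u * u)) := by rw [mul_assoc]
      _ = (e * star e) * (h * u * u) := by rw [mul_assoc h u u]
      _ = p := by rw [hu1, one_mul, hp]
  have hstarp : star p = p := by
    rw [hp, star_mul, star_mul, star_star, hstaru, huE]
  have hpne : p ≠ 0 := by
    intro h0
    apply hne
    rw [← hpe, h0, zero_mul]
  obtain ⟨r, hr, hlr⟩ := hpos p hpne
  have hler : l e = (r : ℂ) := by
    calc l e = l (p * e) := by rw [hpe]
      _ = l (e * p) := htrace p e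
      _ = l p := by rw [hep]
      _ = l (p * star p) := by rw [hstarp, hpp]
      _ = (r : ℂ) := hlr
  rw [hler]
  exact_mod_cast ne_of_gt hr

end Aux

/-- Let `A` be a finite-dimensional `*`-algebra over `ℂ` with a
positive trace `l`. If `l(aⁿ) = 0` for all `n ≥ 1`, then `a` is nilpotent. -/
theorem nilpotent_of_trace_powers_eq_zero
    (A : Type*) [Ring A] [Algebra ℂ A] [StarRing A] [StarModule ℂ A]
    [FiniteDimensional ℂ A]
    (l : A →ₗ[ℂ] ℂ)
    (htrace : ∀ a b : A, l (a * b) = l (b * a))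
    (hstar : ∀ a : A, l (star a) = starRingEnd ℂ (l a))
    (hpos : ∀ a : A, a ≠ 0 → ∃ r : ℝ, 0 < r ∧ l (a * star a) = (r : ℂ))
    (a : A) (ha : ∀ n : ℕ, 1 ≤ n → l (a ^ n) = 0) :
    IsNilpotent a := by
  classical
  -- the descending chain of spans of powers of `a`
  set W : ℕ → Submodule ℂ A := fun n => span ℂ (Set.range fun j : ℕ => a ^ (n + 1 + j)) with hW
  have hWle : ∀ n, W (n + 1) ≤ W n := by
    intro n
    rw [hW]
    apply span_le.2
    rintro _ ⟨j, rfl⟩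
    exact subset_span ⟨j + 1, show a ^ (n + 1 + (j + 1)) = a ^ (n + 1 + 1 + j) by congr 1; omega⟩
  have hstab : ∃ k : ℕ, W k ≤ W (k + 1) := by
    by_contra hcon
    push_neg at hcon
    have hlt : ∀ k, W (k + 1) < W k := fun k => lt_of_le_of_ne (hWle k)
      (fun hEq => hcon k (le_of_eq hEq.symm))
    set g : ℕ → ℕ := fun n => Module.finrank ℂ (W n) with hg
    have hglt : ∀ n, g (n + 1) < g n := fun n => Submodule.finrank_lt_finrank_of_lt (hlt n)
    have hbound : ∀ n, g n + n ≤ g 0 := by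
      intro n
      induction n with
      | zero => omega
      | succ m ih => have := hglt m; omega
    have := hbound (g 0 + 1)
    omega
  obtain ⟨k, hk⟩ := hstab
  have hmemk : a ^ (k + 1) ∈ W k :=
    subset_span ⟨0, show a ^ (k + 1 + 0) = a ^ (k + 1) by rw [add_zero]⟩
  have hmem : a ^ (k + 1) ∈ W (k + 1) := hk hmemk
  rw [hW] at hmem
  rw [Finsupp.mem_span_range_iff_exists_finsupp] at hmem
  obtain ⟨c, hc⟩ := hmem
  set K := k + 1 with hK
  set c' : A := c.sum fun j r => r • a ^ j with hc'
  have hac' : a ^ (K + 1) * c' = a ^ K := by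
    rw [hc', Finsupp.mul_sum]
    rw [← hc]
    apply Finsupp.sum_congr
    intro j _
    rw [mul_smul_comm, ← pow_add]
  have hcomm : Commute a c' := by
    rw [hc']
    apply Finset.sum_induction _ (fun x => Commute a x)
      (fun x y hx hy => Commute.add_right hx hy) (Commute.zero_right a)
    intro j _
    exact ((Commute.refl a).pow_right j).smul_right (c j)
  set P : Submodule ℂ A := span ℂ (Set.range fun j : ℕ => a ^ j) with hP
  have hc'P : c' ∈ P := by
    rw [hc']
    apply Submodule.sum_mem
    intro j _
    exact Submodule.smul_mem _ _ (subset_span ⟨j, rfl⟩)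
  have hPmul : ∀ x ∈ P, ∀ y ∈ P, x * y ∈ P := by
    intro x hx
    induction hx using Submodule.span_induction with
    | mem x hxs =>
      obtain ⟨i, rfl⟩ := hxs
      intro y hy
      induction hy using Submodule.span_induction with
      | mem y hys =>
        obtain ⟨j, rfl⟩ := hys
        rw [← pow_add]
        exact subset_span ⟨i + j, rfl⟩
      | zero => rw [mul_zero]; exact zero_mem _
      | add y z _ _ hy hz => rw [mul_add]; exact add_mem hy hz
      | smul r y _ hy => rw [mul_smul_comm]; exact Submodule.smul_mem _ _ hy
    | zero => intro y hy; rw [zero_mul]; exact zero_mem _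
    | add x z _ _ hx hz => intro y hy; rw [add_mul]; exact add_mem (hx y hy) (hz y hy)
    | smul r x _ hx => intro y hy; rw [smul_mul_assoc]; exact Submodule.smul_mem _ _ (hx y hy)
  have hpowP : ∀ n : ℕ, c' ^ n ∈ P := by
    intro n
    induction n with
    | zero =>
      rw [pow_zero]
      have : a ^ 0 ∈ P := subset_span ⟨0, rfl⟩
      rwa [pow_zero] at this
    | succ m ih => rw [pow_succ]; exact hPmul _ ih _ hc'P
  have hl0 : ∀ x ∈ P, l (a ^ K * x) = 0 := by
    intro x hx
    induction hx using Submodule.span_induction with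
    | mem x hxs =>
      obtain ⟨j, rfl⟩ := hxs
      rw [← pow_add]
      exact ha (K + j) (by omega)
    | zero => rw [mul_zero, map_zero]
    | add x y _ _ hx hy => rw [mul_add, map_add, hx, hy, add_zero]
    | smul r x _ hx => rw [mul_smul_comm, map_smul, hx, smul_zero]
  have key : ∀ j : ℕ, a ^ (K + j) * c' ^ j = a ^ K := by
    intro j
    induction j with
    | zero => rw [pow_zero, mul_one, add_zero]
    | succ m ih =>
      have hcm : Commute a (c' ^ m) := hcomm.pow_right m
      calc a ^ (K + (m + 1)) * c' ^ (m + 1)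
          = (a ^ (K + m) * a) * (c' ^ m * c') := by rw [← pow_succ, ← pow_succ]; ring_nf
        _ = a ^ (K + m) * (a * c' ^ m) * c' := by rw [mul_assoc, mul_assoc, mul_assoc]
        _ = a ^ (K + m) * (c' ^ m * a) * c' := by rw [hcm.eq]
        _ = (a ^ (K + m) * c' ^ m) * (a * c') := by
            rw [mul_assoc, mul_assoc, mul_assoc]
        _ = a ^ K * (a * c') := by rw [ih]
        _ = a ^ (K + 1) * c' := by rw [← mul_assoc, ← pow_succ]
        _ = a ^ K := hac'
  set e : A := a ^ K * c' ^ K with he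
  have hKK : Commute (a ^ K) (c' ^ K) := hcomm.pow_pow K K
  have hee : e * e = e := by
    calc e * e = a ^ K * (c' ^ K * (a ^ K * c' ^ K)) := by rw [he, mul_assoc]
      _ = a ^ K * (c' ^ K * a ^ K * c' ^ K) := by rw [mul_assoc (c' ^ K) (a ^ K) (c' ^ K)]
      _ = a ^ K * (a ^ K * c' ^ K * c' ^ K) := by rw [← hKK.eq]
      _ = a ^ K * (a ^ K * (c' ^ K * c' ^ K)) := by rw [mul_assoc (a ^ K) (c' ^ K) (c' ^ K)]
      _ = a ^ K * a ^ K * (c' ^ K * c' ^ K) := by rw [← mul_assoc]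
      _ = a ^ (K + K) * (c' ^ K * c' ^ K) := by rw [← pow_add]
      _ = a ^ (K + K) * c' ^ K * c' ^ K := by rw [← mul_assoc]
      _ = a ^ K * c' ^ K := by rw [key K]
      _ = e := he.symm
  have hea : e * a ^ K = a ^ K := by
    calc e * a ^ K = a ^ K * (c' ^ K * a ^ K) := by rw [he, mul_assoc]
      _ = a ^ K * (a ^ K * c' ^ K) := by rw [← hKK.eq]
      _ = a ^ (K + K) * c' ^ K := by rw [← mul_assoc, ← pow_add]
      _ = a ^ K := key K
  have hle : l e = 0 := by rw [he]; exact hl0 _ (hpowP K)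
  have he0 : e = 0 := by
    by_contra hne
    exact aux_idem l htrace hpos e hee hne hle
  refine ⟨K, ?_⟩
  rw [← hea, he0, zero_mul]
end
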